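/- arXiv:2208.12647 — 5 statements merged into one kernel-verified Lean document; each statement's English description precedes it below -/
import Mathlib

section
/- Let 0 → V → ĝ →^p g → 0 be an abelian extension of compatible 3-Lie algebras, and σ: g → ĝ a linear section (p∘σ = Id). Define ρ(x,y)u = [σ(x),σ(y),u]_ĝ and μ(x,y)u = {σ(x),σ(y),u}_ĝ for x,y ∈ g, u ∈ V. Then (V;ρ,μ) is a representation of the compatible 3-Lie algebra g, and ρ, μ do not depend on the choice of linear section σ. -/
section Defs

/-- A map `G × G × G → H` is trilinear if it is linear in each argument. -/
def IsTrilinearMap (K : Type*) {G H : Type*} [Field K] [AddCommGroup G] [Module K G]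
    [AddCommGroup H] [Module K H] (b : G → G → G → H) : Prop :=
  (∀ y z, IsLinearMap K (fun x => b x y z)) ∧
  (∀ x z, IsLinearMap K (fun y => b x y z)) ∧
  (∀ x y, IsLinearMap K (fun z => b x y z))

/-- Skew-symmetry of a ternary bracket. -/
def IsSkewSym {G H : Type*} [AddCommGroup G] [AddCommGroup H] (b : G → G → G → H) : Prop :=
  (∀ x y z, b x y z = - b y x z) ∧ (∀ x y z, b x y z = - b x z y)

/-- The Fundamental Identity of a 3-Lie algebra. -/
def FundIdent {G : Type*} [AddCommGroup G] (b : G → G → G → G) : Prop :=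
  ∀ x₁ x₂ x₃ x₄ x₅, b x₁ x₂ (b x₃ x₄ x₅) =
    b (b x₁ x₂ x₃) x₄ x₅ + b x₃ (b x₁ x₂ x₄) x₅ + b x₃ x₄ (b x₁ x₂ x₅)

/-- A 3-Lie algebra structure: a skew-symmetric trilinear bracket satisfying
the Fundamental Identity. -/
def Is3Lie (K : Type*) {G : Type*} [Field K] [AddCommGroup G] [Module K G]
    (b : G → G → G → G) : Prop :=
  IsTrilinearMap K b ∧ IsSkewSym b ∧ FundIdent b

/-- The compatibility condition (2.4) between two ternary brackets. -/
def Compat {G : Type*} [AddCommGroup G] (b₁ b₂ : G → G → G → G) : Prop :=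
  ∀ x₁ x₂ x₃ x₄ x₅,
    b₁ x₁ x₂ (b₂ x₃ x₄ x₅) + b₂ x₁ x₂ (b₁ x₃ x₄ x₅) =
    b₁ (b₂ x₁ x₂ x₃) x₄ x₅ + b₂ (b₁ x₁ x₂ x₃) x₄ x₅
    + b₁ x₃ (b₂ x₁ x₂ x₄) x₅ + b₂ x₃ (b₁ x₁ x₂ x₄) x₅
    + b₁ x₃ x₄ (b₂ x₁ x₂ x₅) + b₂ x₃ x₄ (b₁ x₁ x₂ x₅)

/-- The linear combination `k₁ • b₁ + k₂ • b₂` of two ternary brackets. -/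
def combBracket {K G : Type*} [Field K] [AddCommGroup G] [Module K G]
    (k₁ k₂ : K) (b₁ b₂ : G → G → G → G) : G → G → G → G :=
  fun x y z => k₁ • b₁ x y z + k₂ • b₂ x y z

/-- Nijenhuis operator condition for a ternary bracket. -/
def IsNijenhuis {K G : Type*} [Field K] [AddCommGroup G] [Module K G]
    (b : G → G → G → G) (N : G →ₗ[K] G) : Prop :=
  ∀ x y z, b (N x) (N y) (N z) =
    N (b (N x) (N y) z + b x (N y) (N z) + b (N x) y (N z)
      - N (b (N x) y z) - N (b x (N y) z) - N (b x y (N z)) + N (N (b x y z)))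

/-- The deformed bracket `[·,·,·]_N` associated to a linear map `N`. -/
def deformedBracket {K G : Type*} [Field K] [AddCommGroup G] [Module K G]
    (b : G → G → G → G) (N : G →ₗ[K] G) : G → G → G → G :=
  fun x y z =>
    b (N x) (N y) z + b x (N y) (N z) + b (N x) y (N z)
      - N (b (N x) y z) - N (b x (N y) z) - N (b x y (N z)) + N (N (b x y z))

/-- The mixed (degree one) compatibility/cocycle condition between two brackets
`b₁, b₂` and two 2-cochains `w₁, w₂`: the sum of the mixed versions of the
compatibility condition. -/
def MixedCocycleCond {G : Type*} [AddCommGroup G]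
    (b₁ b₂ w₁ w₂ : G → G → G → G) : Prop :=
  ∀ x₁ x₂ x₃ x₄ x₅,
    b₁ x₁ x₂ (w₂ x₃ x₄ x₅) + w₂ x₁ x₂ (b₁ x₃ x₄ x₅)
    + b₂ x₁ x₂ (w₁ x₃ x₄ x₅) + w₁ x₁ x₂ (b₂ x₃ x₄ x₅) =
    b₁ (w₂ x₁ x₂ x₃) x₄ x₅ + w₂ (b₁ x₁ x₂ x₃) x₄ x₅
    + b₂ (w₁ x₁ x₂ x₃) x₄ x₅ + w₁ (b₂ x₁ x₂ x₃) x₄ x₅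
    + b₁ x₃ (w₂ x₁ x₂ x₄) x₅ + w₂ x₃ (b₁ x₁ x₂ x₄) x₅
    + b₂ x₃ (w₁ x₁ x₂ x₄) x₅ + w₁ x₃ (b₂ x₁ x₂ x₄) x₅
    + b₁ x₃ x₄ (w₂ x₁ x₂ x₅) + w₂ x₃ x₄ (b₁ x₁ x₂ x₅)
    + b₂ x₃ x₄ (w₁ x₁ x₂ x₅) + w₁ x₃ x₄ (b₂ x₁ x₂ x₅)

/-- `ρ : Λ²g → gl(V)` as a skew-symmetric bilinear map into endomorphisms. -/
def IsRepMap (K : Type*) {G V : Type*} [Field K] [AddCommGroup G] [Module K G]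
    [AddCommGroup V] [Module K V] (ρ : G → G → Module.End K V) : Prop :=
  (∀ y, IsLinearMap K (fun x => ρ x y)) ∧ (∀ x, IsLinearMap K (fun y => ρ x y)) ∧
  (∀ x y, ρ x y = - ρ y x)

/-- The representation conditions of a 3-Lie algebra. -/
def Is3LieRep {K G V : Type*} [Field K] [AddCommGroup G] [Module K G]
    [AddCommGroup V] [Module K V] (b : G → G → G → G)
    (ρ : G → G → Module.End K V) : Prop :=
  (∀ x₁ x₂ x₃ x₄, ρ x₁ x₂ * ρ x₃ x₄ =
      ρ (b x₁ x₂ x₃) x₄ + ρ x₃ (b x₁ x₂ x₄) + ρ x₃ x₄ * ρ x₁ x₂) ∧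
  (∀ x₁ x₂ x₃ x₄, ρ x₁ (b x₂ x₃ x₄) =
      ρ x₃ x₄ * ρ x₁ x₂ - ρ x₂ x₄ * ρ x₁ x₃ + ρ x₂ x₃ * ρ x₁ x₄)

/-- The two mixed compatibility identities of a representation of a compatible
3-Lie algebra. -/
def CompatRep {K G V : Type*} [Field K] [AddCommGroup G] [Module K G]
    [AddCommGroup V] [Module K V] (b₁ b₂ : G → G → G → G)
    (ρ μ : G → G → Module.End K V) : Prop :=
  (∀ x₁ x₂ x₃ x₄,
    ρ (b₂ x₁ x₂ x₃) x₄ + μ (b₁ x₁ x₂ x₃) x₄ + ρ x₃ (b₂ x₁ x₂ x₄) + μ x₃ (b₁ x₁ x₂ x₄)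
      = (ρ x₁ x₂ * μ x₃ x₄ - μ x₃ x₄ * ρ x₁ x₂)
        - (ρ x₃ x₄ * μ x₁ x₂ - μ x₁ x₂ * ρ x₃ x₄)) ∧
  (∀ x₁ x₂ x₃ x₄,
    ρ (b₂ x₁ x₂ x₃) x₄ + μ (b₁ x₁ x₂ x₃) x₄ - ρ x₃ x₁ * μ x₂ x₄ - μ x₃ x₁ * ρ x₂ x₄
      = ρ x₁ x₂ * μ x₃ x₄ + μ x₁ x₂ * ρ x₃ x₄ + ρ x₂ x₃ * μ x₁ x₄ + μ x₂ x₃ * ρ x₁ x₄)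

/-- The semidirect product bracket on `g ⊕ V`. -/
def sdBracket {K G V : Type*} [Field K] [AddCommGroup G] [Module K G]
    [AddCommGroup V] [Module K V] (b : G → G → G → G)
    (ρ : G → G → Module.End K V) : G × V → G × V → G × V → G × V :=
  fun p q r => (b p.1 q.1 r.1, ρ p.1 q.1 r.2 + ρ q.1 r.1 p.2 + ρ r.1 p.1 q.2)

/-- The 2-cocycle expression of a 2-cochain `w` with coefficients in a
representation `ρ` of the 3-Lie algebra `(g,b)`. -/
def CocycleExpr {K G V : Type*} [Field K] [AddCommGroup G] [Module K G]
    [AddCommGroup V] [Module K V] (b : G → G → G → G)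
    (ρ : G → G → Module.End K V) (w : G → G → G → V) (x₁ x₂ x₃ x₄ x₅ : G) : V :=
  w x₁ x₂ (b x₃ x₄ x₅) - w (b x₁ x₂ x₃) x₄ x₅ - w x₃ (b x₁ x₂ x₄) x₅
    - w x₃ x₄ (b x₁ x₂ x₅)
  + ρ x₁ x₂ (w x₃ x₄ x₅) - ρ x₃ x₄ (w x₁ x₂ x₅) - ρ x₄ x₅ (w x₁ x₂ x₃)
    - ρ x₅ x₃ (w x₁ x₂ x₄)

/-- The bracket on `g ⊕ V` twisted by a 2-cochain `w`. -/
def extBracket {K G V : Type*} [Field K] [AddCommGroup G] [Module K G]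
    [AddCommGroup V] [Module K V] (b : G → G → G → G)
    (ρ : G → G → Module.End K V) (w : G → G → G → V) :
    G × V → G × V → G × V → G × V :=
  fun p q r => (b p.1 q.1 r.1,
    ρ p.1 q.1 r.2 + ρ q.1 r.1 p.2 + ρ r.1 p.1 q.2 + w p.1 q.1 r.1)

end Defs

section AuxLemmas

variable {K E G V : Type*} [Field K] [AddCommGroup E] [Module K E]
  [AddCommGroup G] [Module K G] [AddCommGroup V] [Module K V]

lemma aux_helper1 {A : Type*} [AddCommGroup A] {a b x y : A}
    (h : a = b) (key : x + b = y + a) : x = y := by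
  rw [h] at key
  exact add_right_cancel key

lemma aux_cyc {B : E → E → E → E} (hsk : IsSkewSym B) (a b c : E) :
    B a b c = B b c a := by
  rw [hsk.1 a b c, hsk.2 b a c, neg_neg]

lemma aux_s1 {B : E → E → E → E} (htr : IsTrilinearMap K B) (hsk : IsSkewSym B)
    (i : V →ₗ[K] E) (p : E →ₗ[K] G)
    (hexact : LinearMap.range i = LinearMap.ker p)
    (habel : ∀ (u v : V) (α : E), B (i u) (i v) α = 0)
    (α β γ : E) (v : V) (h : p α = p β) :
    B α γ (i v) = B β γ (i v) := by
  have hk : α - β ∈ LinearMap.ker p := by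
    simp [LinearMap.mem_ker, map_sub, h]
  rw [← hexact] at hk
  obtain ⟨u, hu⟩ := hk
  have hα : α = β + i u := by rw [hu]; abel
  have h2 : B (β + i u) γ (i v) = B β γ (i v) + B (i u) γ (i v) :=
    (htr.1 γ (i v)).map_add β (i u)
  have h3 : B (i u) γ (i v) = 0 := by
    rw [hsk.2 (i u) γ (i v), habel, neg_zero]
  rw [hα, h2, h3, add_zero]

lemma aux_s2 {B : E → E → E → E} (htr : IsTrilinearMap K B) (hsk : IsSkewSym B)
    (i : V →ₗ[K] E) (p : E →ₗ[K] G)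
    (hexact : LinearMap.range i = LinearMap.ker p)
    (habel : ∀ (u v : V) (α : E), B (i u) (i v) α = 0)
    (α β γ : E) (v : V) (h : p α = p β) :
    B γ α (i v) = B γ β (i v) := by
  rw [hsk.1 γ α (i v), hsk.1 γ β (i v),
    aux_s1 htr hsk i p hexact habel α β γ v h]

lemma ext_rep (B : E → E → E → E) (hB : Is3Lie K B) (b : G → G → G → G)
    (i : V →ₗ[K] E) (p : E →ₗ[K] G) (hi : Function.Injective i)
    (hexact : LinearMap.range i = LinearMap.ker p)
    (hphom : ∀ a c d, p (B a c d) = b (p a) (p c) (p d))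
    (habel : ∀ (u v : V) (α : E), B (i u) (i v) α = 0)
    (σ : G →ₗ[K] E) (hσ : ∀ x, p (σ x) = x)
    (ρ : G → G → Module.End K V)
    (hρ : ∀ (x y : G) (u : V), i (ρ x y u) = B (σ x) (σ y) (i u)) :
    IsRepMap K ρ ∧ Is3LieRep b ρ := by
  obtain ⟨htr, hsk, hfi⟩ := hB
  have cyc := aux_cyc (B := B) hsk
  have s1 := aux_s1 htr hsk i p hexact habel
  have s2 := aux_s2 htr hsk i p hexact habel
  have hρs : ∀ x y u, ρ x y u = - ρ y x u := by
    intro x y u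
    apply hi
    rw [map_neg, hρ, hρ, hsk.1]
  have hrep : IsRepMap K ρ := by
    refine ⟨fun y => ⟨fun x x' => ?_, fun c x => ?_⟩,
      fun x => ⟨fun y y' => ?_, fun c y => ?_⟩, fun x y => ?_⟩
    · refine LinearMap.ext fun u => hi ?_
      simp only [LinearMap.add_apply, map_add, hρ]
      exact (htr.1 (σ y) (i u)).map_add (σ x) (σ x')
    · refine LinearMap.ext fun u => hi ?_
      simp only [LinearMap.smul_apply, map_smul, hρ]
      exact (htr.1 (σ y) (i u)).map_smul c (σ x)
    · refine LinearMap.ext fun u => hi ?_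
      simp only [LinearMap.add_apply, map_add, hρ]
      exact (htr.2.1 (σ x) (i u)).map_add (σ y) (σ y')
    · refine LinearMap.ext fun u => hi ?_
      simp only [LinearMap.smul_apply, map_smul, hρ]
      exact (htr.2.1 (σ x) (i u)).map_smul c (σ y)
    · refine LinearMap.ext fun u => ?_
      simp only [LinearMap.neg_apply]
      exact hρs x y u
  have R1 : ∀ x₁ x₂ x₃ x₄ u, ρ x₁ x₂ (ρ x₃ x₄ u) =
      ρ (b x₁ x₂ x₃) x₄ u + ρ x₃ (b x₁ x₂ x₄) u + ρ x₃ x₄ (ρ x₁ x₂ u) := by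
    intro x₁ x₂ x₃ x₄ u
    apply hi
    simp only [map_add, hρ]
    rw [s1 (σ (b x₁ x₂ x₃)) (B (σ x₁) (σ x₂) (σ x₃)) (σ x₄) u
          (by simp [hσ, hphom]),
        s2 (σ (b x₁ x₂ x₄)) (B (σ x₁) (σ x₂) (σ x₄)) (σ x₃) u
          (by simp [hσ, hphom])]
    exact hfi (σ x₁) (σ x₂) (σ x₃) (σ x₄) (i u)
  have R2 : ∀ x₁ x₂ x₃ x₄ u, ρ x₁ (b x₂ x₃ x₄) u =
      ρ x₃ x₄ (ρ x₁ x₂ u) - ρ x₂ x₄ (ρ x₁ x₃ u) + ρ x₂ x₃ (ρ x₁ x₄ u) := by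
    intro x₁ x₂ x₃ x₄ u
    apply hi
    simp only [map_add, map_sub, hρ]
    rw [s2 (σ (b x₂ x₃ x₄)) (B (σ x₂) (σ x₃) (σ x₄)) (σ x₁) u
          (by simp [hσ, hphom])]
    have h := hfi (i u) (σ x₁) (σ x₂) (σ x₃) (σ x₄)
    rw [cyc (i u) (σ x₁) (B (σ x₂) (σ x₃) (σ x₄)),
        cyc (i u) (σ x₁) (σ x₂), cyc (i u) (σ x₁) (σ x₃),
        cyc (i u) (σ x₁) (σ x₄),
        cyc (B (σ x₁) (σ x₂) (i u)) (σ x₃) (σ x₄),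
        hsk.2 (σ x₂) (B (σ x₁) (σ x₃) (i u)) (σ x₄)] at h
    rw [h]
    abel
  refine ⟨hrep, fun x₁ x₂ x₃ x₄ => ?_, fun x₁ x₂ x₃ x₄ => ?_⟩
  · refine LinearMap.ext fun u => ?_
    simp only [Module.End.mul_apply, LinearMap.add_apply]
    exact R1 x₁ x₂ x₃ x₄ u
  · refine LinearMap.ext fun u => ?_
    simp only [Module.End.mul_apply, LinearMap.add_apply, LinearMap.sub_apply]
    exact R2 x₁ x₂ x₃ x₄ u

lemma ext_compat (B₁ B₂ : E → E → E → E) (hB₁ : Is3Lie K B₁) (hB₂ : Is3Lie K B₂)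
    (hBc : Compat B₁ B₂) (b₁ b₂ : G → G → G → G)
    (i : V →ₗ[K] E) (p : E →ₗ[K] G) (hi : Function.Injective i)
    (hexact : LinearMap.range i = LinearMap.ker p)
    (hphom₁ : ∀ a c d, p (B₁ a c d) = b₁ (p a) (p c) (p d))
    (hphom₂ : ∀ a c d, p (B₂ a c d) = b₂ (p a) (p c) (p d))
    (habel₁ : ∀ (u v : V) (α : E), B₁ (i u) (i v) α = 0)
    (habel₂ : ∀ (u v : V) (α : E), B₂ (i u) (i v) α = 0)
    (σ : G →ₗ[K] E) (hσ : ∀ x, p (σ x) = x)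
    (ρ μ : G → G → Module.End K V)
    (hρ : ∀ (x y : G) (u : V), i (ρ x y u) = B₁ (σ x) (σ y) (i u))
    (hμ : ∀ (x y : G) (u : V), i (μ x y u) = B₂ (σ x) (σ y) (i u)) :
    CompatRep b₁ b₂ ρ μ := by
  obtain ⟨htr₁, hsk₁, hfi₁⟩ := hB₁
  obtain ⟨htr₂, hsk₂, hfi₂⟩ := hB₂
  have cyc₁ := aux_cyc (B := B₁) hsk₁
  have cyc₂ := aux_cyc (B := B₂) hsk₂
  have s1₁ := aux_s1 htr₁ hsk₁ i p hexact habel₁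
  have s2₁ := aux_s2 htr₁ hsk₁ i p hexact habel₁
  have s1₂ := aux_s1 htr₂ hsk₂ i p hexact habel₂
  have s2₂ := aux_s2 htr₂ hsk₂ i p hexact habel₂
  have hρs : ∀ x y u, ρ x y u = - ρ y x u := by
    intro x y u
    apply hi
    rw [map_neg, hρ, hρ, hsk₁.1]
  have hμs : ∀ x y u, μ x y u = - μ y x u := by
    intro x y u
    apply hi
    rw [map_neg, hμ, hμ, hsk₂.1]
  have hV1 : ∀ x₁ x₂ x₃ x₄ u,
      ρ x₁ x₂ (μ x₃ x₄ u) + μ x₁ x₂ (ρ x₃ x₄ u) =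
      ρ (b₂ x₁ x₂ x₃) x₄ u + μ (b₁ x₁ x₂ x₃) x₄ u + ρ x₃ (b₂ x₁ x₂ x₄) u
        + μ x₃ (b₁ x₁ x₂ x₄) u + ρ x₃ x₄ (μ x₁ x₂ u) + μ x₃ x₄ (ρ x₁ x₂ u) := by
    intro x₁ x₂ x₃ x₄ u
    apply hi
    simp only [map_add, hρ, hμ]
    rw [s1₁ (σ (b₂ x₁ x₂ x₃)) (B₂ (σ x₁) (σ x₂) (σ x₃)) (σ x₄) u
          (by simp [hσ, hphom₂]),
        s1₂ (σ (b₁ x₁ x₂ x₃)) (B₁ (σ x₁) (σ x₂) (σ x₃)) (σ x₄) u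
          (by simp [hσ, hphom₁]),
        s2₁ (σ (b₂ x₁ x₂ x₄)) (B₂ (σ x₁) (σ x₂) (σ x₄)) (σ x₃) u
          (by simp [hσ, hphom₂]),
        s2₂ (σ (b₁ x₁ x₂ x₄)) (B₁ (σ x₁) (σ x₂) (σ x₄)) (σ x₃) u
          (by simp [hσ, hphom₁])]
    exact hBc (σ x₁) (σ x₂) (σ x₃) (σ x₄) (i u)
  have hV2 : ∀ x₁ x₂ x₃ x₄ u,
      ρ x₄ (b₂ x₁ x₂ x₃) u + μ x₄ (b₁ x₁ x₂ x₃) u =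
      ρ x₂ x₃ (μ x₄ x₁ u) + μ x₂ x₃ (ρ x₄ x₁ u) + -ρ x₁ x₃ (μ x₄ x₂ u)
        + -μ x₁ x₃ (ρ x₄ x₂ u) + ρ x₁ x₂ (μ x₄ x₃ u) + μ x₁ x₂ (ρ x₄ x₃ u) := by
    intro x₁ x₂ x₃ x₄ u
    apply hi
    simp only [map_add, map_neg, hρ, hμ]
    rw [s2₁ (σ (b₂ x₁ x₂ x₃)) (B₂ (σ x₁) (σ x₂) (σ x₃)) (σ x₄) u
          (by simp [hσ, hphom₂]),
        s2₂ (σ (b₁ x₁ x₂ x₃)) (B₁ (σ x₁) (σ x₂) (σ x₃)) (σ x₄) u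
          (by simp [hσ, hphom₁])]
    have h := hBc (i u) (σ x₄) (σ x₁) (σ x₂) (σ x₃)
    simp only [cyc₁ (i u) (σ x₄), cyc₂ (i u) (σ x₄)] at h
    rw [cyc₁ (B₂ (σ x₄) (σ x₁) (i u)) (σ x₂) (σ x₃),
        cyc₂ (B₁ (σ x₄) (σ x₁) (i u)) (σ x₂) (σ x₃),
        hsk₁.2 (σ x₁) (B₂ (σ x₄) (σ x₂) (i u)) (σ x₃),
        hsk₂.2 (σ x₁) (B₁ (σ x₄) (σ x₂) (i u)) (σ x₃)] at h
    exact h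
  constructor
  · intro x₁ x₂ x₃ x₄
    refine LinearMap.ext fun u => ?_
    simp only [Module.End.mul_apply, LinearMap.add_apply, LinearMap.sub_apply]
    exact aux_helper1 (hV1 x₁ x₂ x₃ x₄ u).symm (by abel)
  · intro x₁ x₂ x₃ x₄
    refine LinearMap.ext fun u => ?_
    simp only [Module.End.mul_apply, LinearMap.add_apply, LinearMap.sub_apply]
    rw [hρs (b₂ x₁ x₂ x₃) x₄ u, hμs (b₁ x₁ x₂ x₃) x₄ u,
        hρs x₃ x₁ (μ x₂ x₄ u), hμs x₃ x₁ (ρ x₂ x₄ u),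
        hμs x₂ x₄ u, hρs x₂ x₄ u, hμs x₃ x₄ u, hρs x₃ x₄ u,
        hμs x₁ x₄ u, hρs x₁ x₄ u]
    simp only [map_neg]
    exact aux_helper1 (hV2 x₁ x₂ x₃ x₄ u).symm (by abel)

end AuxLemmas

theorem stmt13 {K E G V : Type*} [Field K] [CharZero K]
    [AddCommGroup E] [Module K E] [AddCommGroup G] [Module K G]
    [AddCommGroup V] [Module K V]
    (B₁ B₂ : E → E → E → E) (hB₁ : Is3Lie K B₁) (hB₂ : Is3Lie K B₂) (hBc : Compat B₁ B₂)
    (b₁ b₂ : G → G → G → G) (hb₁ : Is3Lie K b₁) (hb₂ : Is3Lie K b₂) (hbc : Compat b₁ b₂)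
    (i : V →ₗ[K] E) (p : E →ₗ[K] G)
    (hi : Function.Injective i) (hp : Function.Surjective p)
    (hexact : LinearMap.range i = LinearMap.ker p)
    (hphom₁ : ∀ a b c, p (B₁ a b c) = b₁ (p a) (p b) (p c))
    (hphom₂ : ∀ a b c, p (B₂ a b c) = b₂ (p a) (p b) (p c))
    (habel₁ : ∀ (u v : V) (α : E), B₁ (i u) (i v) α = 0)
    (habel₂ : ∀ (u v : V) (α : E), B₂ (i u) (i v) α = 0)
    (σ : G →ₗ[K] E) (hσ : ∀ x, p (σ x) = x)
    (ρ μ : G → G → Module.End K V)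
    (hρ : ∀ (x y : G) (u : V), i (ρ x y u) = B₁ (σ x) (σ y) (i u))
    (hμ : ∀ (x y : G) (u : V), i (μ x y u) = B₂ (σ x) (σ y) (i u)) :
    (IsRepMap K ρ ∧ IsRepMap K μ ∧ Is3LieRep b₁ ρ ∧ Is3LieRep b₂ μ ∧
      CompatRep b₁ b₂ ρ μ) ∧
    (∀ σ' : G →ₗ[K] E, (∀ x, p (σ' x) = x) →
      ∀ (x y : G) (u : V), B₁ (σ' x) (σ' y) (i u) = B₁ (σ x) (σ y) (i u) ∧
        B₂ (σ' x) (σ' y) (i u) = B₂ (σ x) (σ y) (i u)) := by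
  constructor
  · obtain ⟨hrep₁, h3rep₁⟩ := ext_rep B₁ hB₁ b₁ i p hi hexact hphom₁ habel₁ σ hσ ρ hρ
    obtain ⟨hrep₂, h3rep₂⟩ := ext_rep B₂ hB₂ b₂ i p hi hexact hphom₂ habel₂ σ hσ μ hμ
    exact ⟨hrep₁, hrep₂, h3rep₁, h3rep₂,
      ext_compat B₁ B₂ hB₁ hB₂ hBc b₁ b₂ i p hi hexact hphom₁ hphom₂
        habel₁ habel₂ σ hσ ρ μ hρ hμ⟩
  · intro σ' hσ' x y u
    constructor
    · exact (aux_s1 hB₁.1 hB₁.2.1 i p hexact habel₁ (σ' x) (σ x) (σ' y) u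
          (by rw [hσ', hσ])).trans
        (aux_s2 hB₁.1 hB₁.2.1 i p hexact habel₁ (σ' y) (σ y) (σ x) u
          (by rw [hσ', hσ]))
    · exact (aux_s1 hB₂.1 hB₂.2.1 i p hexact habel₂ (σ' x) (σ x) (σ' y) u
          (by rw [hσ', hσ])).trans
        (aux_s2 hB₂.1 hB₂.2.1 i p hexact habel₂ (σ' y) (σ y) (σ x) u
          (by rw [hσ', hσ]))
end

section
/- Let 0 → V → ĝ →^p g → 0 be an abelian extension of compatible 3-Lie algebras with linear section σ, inducing representation (V;ρ,μ). Define ω₁(x,y,z) = [σ(x),σ(y),σ(z)]_ĝ − σ([x,y,z]_g) and ω₂(x,y,z) = {σ(x),σ(y),σ(z)}_ĝ − σ({x,y,z}_g). Then (ω₁,ω₂) is a 2-cocycle: for all x₁,...,x₅ ∈ g, ω₁(x₁,x₂,[x₃,x₄,x₅]) − ω₁([x₁,x₂,x₃],x₄,x₅) − ω₁(x₃,[x₁,x₂,x₄],x₅) − ω₁(x₃,x₄,[x₁,x₂,x₅]) + ρ(x₁,x₂)ω₁(x₃,x₄,x₅) − ρ(x₃,x₄)ω₁(x₁,x₂,x₅)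 − ρ(x₄,x₅)ω₁(x₁,x₂,x₃) − ρ(x₅,x₃)ω₁(x₁,x₂,x₄) = 0, the analogous identity holds for (ω₂,{·,·,·},μ), and the mixed identity (sum of the two cross versions) holds. -/
section Aux

variable {K E G V : Type*} [Field K]
    [AddCommGroup E] [Module K E] [AddCommGroup G] [Module K G]
    [AddCommGroup V] [Module K V]

lemma compat_self (b : G → G → G → G) (hF : FundIdent b) : Compat b b := by
  intro x₁ x₂ x₃ x₄ x₅
  rw [hF x₁ x₂ x₃ x₄ x₅]
  abel

lemma mixedAux
    (B₁ B₂ : E → E → E → E) (hT₁ : IsTrilinearMap K B₁) (hT₂ : IsTrilinearMap K B₂)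
    (hS₁ : IsSkewSym B₁) (hS₂ : IsSkewSym B₂) (hBc : Compat B₁ B₂)
    (b₁ b₂ : G → G → G → G) (hbc : Compat b₁ b₂)
    (i : V →ₗ[K] E) (hi : Function.Injective i) (σ : G →ₗ[K] E)
    (ρ μ : G → G → Module.End K V)
    (hρ : ∀ x y u, i (ρ x y u) = B₁ (σ x) (σ y) (i u))
    (hμ : ∀ x y u, i (μ x y u) = B₂ (σ x) (σ y) (i u))
    (w₁ w₂ : G → G → G → V)
    (hw₁ : ∀ x y z, i (w₁ x y z) = B₁ (σ x) (σ y) (σ z) - σ (b₁ x y z))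
    (hw₂ : ∀ x y z, i (w₂ x y z) = B₂ (σ x) (σ y) (σ z) - σ (b₂ x y z)) :
    ∀ x₁ x₂ x₃ x₄ x₅ : G,
      CocycleExpr b₂ μ w₁ x₁ x₂ x₃ x₄ x₅ + CocycleExpr b₁ ρ w₂ x₁ x₂ x₃ x₄ x₅ = 0 := by
  intro x₁ x₂ x₃ x₄ x₅
  apply hi
  -- subtraction in each argument
  have sub1₁ : ∀ a b y z, B₁ (a - b) y z = B₁ a y z - B₁ b y z := fun a b y z => by
    simpa using (IsLinearMap.mk' _ (hT₁.1 y z)).map_sub a b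
  have sub2₁ : ∀ x a b z, B₁ x (a - b) z = B₁ x a z - B₁ x b z := fun x a b z => by
    simpa using (IsLinearMap.mk' _ (hT₁.2.1 x z)).map_sub a b
  have sub3₁ : ∀ x y a b, B₁ x y (a - b) = B₁ x y a - B₁ x y b := fun x y a b => by
    simpa using (IsLinearMap.mk' _ (hT₁.2.2 x y)).map_sub a b
  have sub1₂ : ∀ a b y z, B₂ (a - b) y z = B₂ a y z - B₂ b y z := fun a b y z => by
    simpa using (IsLinearMap.mk' _ (hT₂.1 y z)).map_sub a b
  have sub2₂ : ∀ x a b z, B₂ x (a - b) z = B₂ x a z - B₂ x b z := fun x a b z => by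
    simpa using (IsLinearMap.mk' _ (hT₂.2.1 x z)).map_sub a b
  have sub3₂ : ∀ x y a b, B₂ x y (a - b) = B₂ x y a - B₂ x y b := fun x y a b => by
    simpa using (IsLinearMap.mk' _ (hT₂.2.2 x y)).map_sub a b
  -- moving i-terms through skew-symmetry
  have eρ : ∀ x y u, B₁ (i u) (σ x) (σ y) = i (ρ x y u) := by
    intro x y u
    rw [hS₁.1 (i u) (σ x) (σ y), hS₁.2 (σ x) (i u) (σ y), neg_neg, hρ]
  have eρ' : ∀ x y u, B₁ (σ x) (i u) (σ y) = i (ρ y x u) := by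
    intro x y u
    rw [hS₁.2 (σ x) (i u) (σ y), hS₁.1 (σ x) (σ y) (i u), neg_neg, hρ]
  have eμ : ∀ x y u, B₂ (i u) (σ x) (σ y) = i (μ x y u) := by
    intro x y u
    rw [hS₂.1 (i u) (σ x) (σ y), hS₂.2 (σ x) (i u) (σ y), neg_neg, hμ]
  have eμ' : ∀ x y u, B₂ (σ x) (i u) (σ y) = i (μ y x u) := by
    intro x y u
    rw [hS₂.2 (σ x) (i u) (σ y), hS₂.1 (σ x) (σ y) (i u), neg_neg, hμ]
  -- expressing σ of the brackets
  have s1 : ∀ x y z, σ (b₁ x y z) = B₁ (σ x) (σ y) (σ z) - i (w₁ x y z) := by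
    intro x y z; rw [hw₁]; abel
  have s2 : ∀ x y z, σ (b₂ x y z) = B₂ (σ x) (σ y) (σ z) - i (w₂ x y z) := by
    intro x y z; rw [hw₂]; abel
  -- expansion of the eight cochain terms
  have m1 : i (w₁ x₁ x₂ (b₂ x₃ x₄ x₅)) =
      B₁ (σ x₁) (σ x₂) (B₂ (σ x₃) (σ x₄) (σ x₅)) - i (ρ x₁ x₂ (w₂ x₃ x₄ x₅))
        - σ (b₁ x₁ x₂ (b₂ x₃ x₄ x₅)) := by
    rw [hw₁, s2, sub3₁, hρ]
  have m2 : i (w₁ (b₂ x₁ x₂ x₃) x₄ x₅) =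
      B₁ (B₂ (σ x₁) (σ x₂) (σ x₃)) (σ x₄) (σ x₅) - i (ρ x₄ x₅ (w₂ x₁ x₂ x₃))
        - σ (b₁ (b₂ x₁ x₂ x₃) x₄ x₅) := by
    rw [hw₁, s2, sub1₁, eρ]
  have m3 : i (w₁ x₃ (b₂ x₁ x₂ x₄) x₅) =
      B₁ (σ x₃) (B₂ (σ x₁) (σ x₂) (σ x₄)) (σ x₅) - i (ρ x₅ x₃ (w₂ x₁ x₂ x₄))
        - σ (b₁ x₃ (b₂ x₁ x₂ x₄) x₅) := by
    rw [hw₁, s2, sub2₁, eρ']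
  have m4 : i (w₁ x₃ x₄ (b₂ x₁ x₂ x₅)) =
      B₁ (σ x₃) (σ x₄) (B₂ (σ x₁) (σ x₂) (σ x₅)) - i (ρ x₃ x₄ (w₂ x₁ x₂ x₅))
        - σ (b₁ x₃ x₄ (b₂ x₁ x₂ x₅)) := by
    rw [hw₁, s2, sub3₁, hρ]
  have n1 : i (w₂ x₁ x₂ (b₁ x₃ x₄ x₅)) =
      B₂ (σ x₁) (σ x₂) (B₁ (σ x₃) (σ x₄) (σ x₅)) - i (μ x₁ x₂ (w₁ x₃ x₄ x₅))
        - σ (b₂ x₁ x₂ (b₁ x₃ x₄ x₅)) := by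
    rw [hw₂, s1, sub3₂, hμ]
  have n2 : i (w₂ (b₁ x₁ x₂ x₃) x₄ x₅) =
      B₂ (B₁ (σ x₁) (σ x₂) (σ x₃)) (σ x₄) (σ x₅) - i (μ x₄ x₅ (w₁ x₁ x₂ x₃))
        - σ (b₂ (b₁ x₁ x₂ x₃) x₄ x₅) := by
    rw [hw₂, s1, sub1₂, eμ]
  have n3 : i (w₂ x₃ (b₁ x₁ x₂ x₄) x₅) =
      B₂ (σ x₃) (B₁ (σ x₁) (σ x₂) (σ x₄)) (σ x₅) - i (μ x₅ x₃ (w₁ x₁ x₂ x₄))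
        - σ (b₂ x₃ (b₁ x₁ x₂ x₄) x₅) := by
    rw [hw₂, s1, sub2₂, eμ']
  have n4 : i (w₂ x₃ x₄ (b₁ x₁ x₂ x₅)) =
      B₂ (σ x₃) (σ x₄) (B₁ (σ x₁) (σ x₂) (σ x₅)) - i (μ x₃ x₄ (w₁ x₁ x₂ x₅))
        - σ (b₂ x₃ x₄ (b₁ x₁ x₂ x₅)) := by
    rw [hw₂, s1, sub3₂, hμ]
  have cB := eq_sub_of_add_eq (hBc (σ x₁) (σ x₂) (σ x₃) (σ x₄) (σ x₅))
  have cb := eq_sub_of_add_eq (hbc x₁ x₂ x₃ x₄ x₅)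
  simp only [CocycleExpr, map_add, map_sub, map_zero]
  rw [m1, m2, m3, m4, n1, n2, n3, n4, cB, cb]
  simp only [map_add, map_sub]
  abel

end Aux

theorem stmt14 {K E G V : Type*} [Field K] [CharZero K]
    [AddCommGroup E] [Module K E] [AddCommGroup G] [Module K G]
    [AddCommGroup V] [Module K V]
    (B₁ B₂ : E → E → E → E) (hB₁ : Is3Lie K B₁) (hB₂ : Is3Lie K B₂) (hBc : Compat B₁ B₂)
    (b₁ b₂ : G → G → G → G) (hb₁ : Is3Lie K b₁) (hb₂ : Is3Lie K b₂) (hbc : Compat b₁ b₂)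
    (i : V →ₗ[K] E) (p : E →ₗ[K] G)
    (hi : Function.Injective i) (hp : Function.Surjective p)
    (hexact : LinearMap.range i = LinearMap.ker p)
    (hphom₁ : ∀ a b c, p (B₁ a b c) = b₁ (p a) (p b) (p c))
    (hphom₂ : ∀ a b c, p (B₂ a b c) = b₂ (p a) (p b) (p c))
    (habel₁ : ∀ (u v : V) (α : E), B₁ (i u) (i v) α = 0)
    (habel₂ : ∀ (u v : V) (α : E), B₂ (i u) (i v) α = 0)
    (σ : G →ₗ[K] E) (hσ : ∀ x, p (σ x) = x)
    (ρ μ : G → G → Module.End K V)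
    (hρ : ∀ (x y : G) (u : V), i (ρ x y u) = B₁ (σ x) (σ y) (i u))
    (hμ : ∀ (x y : G) (u : V), i (μ x y u) = B₂ (σ x) (σ y) (i u))
    (w₁ w₂ : G → G → G → V)
    (hw₁ : ∀ x y z, i (w₁ x y z) = B₁ (σ x) (σ y) (σ z) - σ (b₁ x y z))
    (hw₂ : ∀ x y z, i (w₂ x y z) = B₂ (σ x) (σ y) (σ z) - σ (b₂ x y z)) :
    (∀ x₁ x₂ x₃ x₄ x₅ : G, CocycleExpr b₁ ρ w₁ x₁ x₂ x₃ x₄ x₅ = 0) ∧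
    (∀ x₁ x₂ x₃ x₄ x₅ : G, CocycleExpr b₂ μ w₂ x₁ x₂ x₃ x₄ x₅ = 0) ∧
    (∀ x₁ x₂ x₃ x₄ x₅ : G,
      CocycleExpr b₂ μ w₁ x₁ x₂ x₃ x₄ x₅ + CocycleExpr b₁ ρ w₂ x₁ x₂ x₃ x₄ x₅ = 0) := by
  have pure : ∀ (B : E → E → E → E), IsTrilinearMap K B → IsSkewSym B → FundIdent B →
      ∀ (b : G → G → G → G), FundIdent b →
      ∀ (ρ' : G → G → Module.End K V), (∀ x y u, i (ρ' x y u) = B (σ x) (σ y) (i u)) →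
      ∀ (w : G → G → G → V), (∀ x y z, i (w x y z) = B (σ x) (σ y) (σ z) - σ (b x y z)) →
      ∀ x₁ x₂ x₃ x₄ x₅ : G, CocycleExpr b ρ' w x₁ x₂ x₃ x₄ x₅ = 0 := by
    intro B hT hS hF b hFb ρ' hρ' w hw x₁ x₂ x₃ x₄ x₅
    have h := mixedAux B B hT hT hS hS (compat_self B hF) b b (compat_self b hFb)
      i hi σ ρ' ρ' hρ' hρ' w w hw hw x₁ x₂ x₃ x₄ x₅
    have h2 : (2 : K) • CocycleExpr b ρ' w x₁ x₂ x₃ x₄ x₅ = 0 := by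
      rw [two_smul]; exact h
    rcases smul_eq_zero.mp h2 with h | h
    · exact absurd h two_ne_zero
    · exact h
  refine ⟨pure B₁ hB₁.1 hB₁.2.1 hB₁.2.2 b₁ hb₁.2.2 ρ hρ w₁ hw₁,
    pure B₂ hB₂.1 hB₂.2.1 hB₂.2.2 b₂ hb₂.2.2 μ hμ w₂ hw₂,
    mixedAux B₁ B₂ hB₁.1 hB₂.1 hB₁.2.1 hB₂.2.1 hBc b₁ b₂ hbc i hi σ ρ μ hρ hμ w₁ w₂ hw₁ hw₂⟩
end

section
/- Let 0 → V → ĝ → g → 0 be an abelian extension of compatible 3-Lie algebras. If σ and σ' are two linear sections with associated 2-cocycles (ω₁,ω₂) and (ω₁',ω₂'), then writing τ = σ' − σ (a linear map g → V), we have ω₁'(x,y,z) − ω₁(x,y,z) = ρ(x,y)τ(z) + ρ(y,z)τ(x) + ρ(z,x)τ(y) − τ([x,y,z]_g) and ω₂'(x,y,z) − ω₂(x,y,z) = μ(x,y)τ(z) + μ(y,z)τ(x) + μ(z,x)τ(y) − τ({x,y,z}_g); hence (ω₁,ω₂) and (ω₁',ω₂') differ by a coboundary. -/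
lemma stmt15_aux {K E G V : Type*} [Field K]
    [AddCommGroup E] [Module K E] [AddCommGroup G] [Module K G]
    [AddCommGroup V] [Module K V]
    (B : E → E → E → E) (hT : IsTrilinearMap K B) (hS : IsSkewSym B)
    (b : G → G → G → G)
    (i : V →ₗ[K] E) (hi : Function.Injective i)
    (habel : ∀ (u v : V) (α : E), B (i u) (i v) α = 0)
    (σ σ' : G →ₗ[K] E)
    (ρ : G → G → Module.End K V)
    (hρ : ∀ (x y : G) (u : V), i (ρ x y u) = B (σ x) (σ y) (i u))
    (w w' : G → G → G → V)
    (hw : ∀ x y z, i (w x y z) = B (σ x) (σ y) (σ z) - σ (b x y z))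
    (hw' : ∀ x y z, i (w' x y z) = B (σ' x) (σ' y) (σ' z) - σ' (b x y z))
    (τ : G →ₗ[K] V) (hτ : ∀ x, i (τ x) = σ' x - σ x) :
    ∀ x y z, w' x y z - w x y z =
      ρ x y (τ z) + ρ y z (τ x) + ρ z x (τ y) - τ (b x y z) := by
  obtain ⟨hl1, hl2, hl3⟩ := hT
  obtain ⟨hs1, hs2⟩ := hS
  have cyc : ∀ a b c, B a b c = B b c a := fun a b c => by
    rw [hs1 a b c, hs2 b a c, neg_neg]
  have z1 : ∀ (u : V) (α : E) (v : V), B (i u) α (i v) = 0 := fun u α v => by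
    rw [hs2, habel, neg_zero]
  have z2 : ∀ (α : E) (u v : V), B α (i u) (i v) = 0 := fun α u v => by
    rw [cyc, habel]
  have hσ'e : ∀ a, σ' a = σ a + i (τ a) := fun a => by rw [hτ a]; abel
  intro x y z
  apply hi
  have expand : B (σ x + i (τ x)) (σ y + i (τ y)) (σ z + i (τ z)) =
      B (σ x) (σ y) (σ z) + B (σ x) (σ y) (i (τ z))
        + B (σ y) (σ z) (i (τ x)) + B (σ z) (σ x) (i (τ y)) := by
    rw [(hl1 _ _).map_add, (hl2 _ _).map_add, (hl2 _ _).map_add,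
      (hl3 _ _).map_add, (hl3 _ _).map_add, (hl3 _ _).map_add, (hl3 _ _).map_add,
      z1, z2, habel, habel]
    have e1 : B (σ x) (i (τ y)) (σ z) = B (σ z) (σ x) (i (τ y)) := by
      rw [cyc, cyc]
    have e2 : B (i (τ x)) (σ y) (σ z) = B (σ y) (σ z) (i (τ x)) := cyc _ _ _
    rw [e1, e2]; abel
  rw [map_sub, hw', hw, hσ'e x, hσ'e y, hσ'e z, expand]
  simp only [hσ'e, map_sub, map_add, hρ]
  abel

theorem stmt15 {K E G V : Type*} [Field K] [CharZero K]
    [AddCommGroup E] [Module K E] [AddCommGroup G] [Module K G]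
    [AddCommGroup V] [Module K V]
    (B₁ B₂ : E → E → E → E) (hB₁ : Is3Lie K B₁) (hB₂ : Is3Lie K B₂) (hBc : Compat B₁ B₂)
    (b₁ b₂ : G → G → G → G) (hb₁ : Is3Lie K b₁) (hb₂ : Is3Lie K b₂) (hbc : Compat b₁ b₂)
    (i : V →ₗ[K] E) (p : E →ₗ[K] G)
    (hi : Function.Injective i) (hp : Function.Surjective p)
    (hexact : LinearMap.range i = LinearMap.ker p)
    (hphom₁ : ∀ a b c, p (B₁ a b c) = b₁ (p a) (p b) (p c))
    (hphom₂ : ∀ a b c, p (B₂ a b c) = b₂ (p a) (p b) (p c))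
    (habel₁ : ∀ (u v : V) (α : E), B₁ (i u) (i v) α = 0)
    (habel₂ : ∀ (u v : V) (α : E), B₂ (i u) (i v) α = 0)
    (σ σ' : G →ₗ[K] E) (hσ : ∀ x, p (σ x) = x) (hσ' : ∀ x, p (σ' x) = x)
    (ρ μ : G → G → Module.End K V)
    (hρ : ∀ (x y : G) (u : V), i (ρ x y u) = B₁ (σ x) (σ y) (i u))
    (hμ : ∀ (x y : G) (u : V), i (μ x y u) = B₂ (σ x) (σ y) (i u))
    (w₁ w₂ w₁' w₂' : G → G → G → V)
    (hw₁ : ∀ x y z, i (w₁ x y z) = B₁ (σ x) (σ y) (σ z) - σ (b₁ x y z))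
    (hw₂ : ∀ x y z, i (w₂ x y z) = B₂ (σ x) (σ y) (σ z) - σ (b₂ x y z))
    (hw₁' : ∀ x y z, i (w₁' x y z) = B₁ (σ' x) (σ' y) (σ' z) - σ' (b₁ x y z))
    (hw₂' : ∀ x y z, i (w₂' x y z) = B₂ (σ' x) (σ' y) (σ' z) - σ' (b₂ x y z))
    (τ : G →ₗ[K] V) (hτ : ∀ x, i (τ x) = σ' x - σ x) :
    (∀ x y z, w₁' x y z - w₁ x y z =
      ρ x y (τ z) + ρ y z (τ x) + ρ z x (τ y) - τ (b₁ x y z)) ∧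
    (∀ x y z, w₂' x y z - w₂ x y z =
      μ x y (τ z) + μ y z (τ x) + μ z x (τ y) - τ (b₂ x y z)) := by
  exact ⟨stmt15_aux B₁ hB₁.1 hB₁.2.1 b₁ i hi habel₁ σ σ' ρ hρ w₁ w₁' hw₁ hw₁' τ hτ,
    stmt15_aux B₂ hB₂.1 hB₂.2.1 b₂ i hi habel₂ σ σ' μ hμ w₂ w₂' hw₂ hw₂' τ hτ⟩
end

section
/- Let (g,[·,·,·],{·,·,·}) be a compatible 3-Lie algebra, (V;ρ,μ) a representation, and (ω₁,ω₂), (ω₁',ω₂') two 2-cocycles. Then the abelian extensions g ⊕_{ρ,μ,ω₁,ω₂} V and g ⊕_{ρ,μ,ω₁',ω₂'} V are isomorphic (via an isomorphism restricting to the identity on V and inducing the identity on g) if and only if there exists a linear map τ: g → V with ω₁(x,y,z) − ω₁'(x,y,z) = ρ(x,y)τ(z) + ρ(y,z)τ(x) + ρ(z,x)τ(y) − τ([x,y,z]) and ω₂(x,y,z) − ω₂'(x,y,z) = μ(x,y)τ(z) + μ(y,z)τ(x) + μ(z,x)τ(y) − τ({x,y,z}). -/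
theorem stmt16 {K G V : Type*} [Field K] [CharZero K] [AddCommGroup G] [Module K G]
    [AddCommGroup V] [Module K V]
    (b₁ b₂ : G → G → G → G) (h₁ : Is3Lie K b₁) (h₂ : Is3Lie K b₂) (hc : Compat b₁ b₂)
    (ρ μ : G → G → Module.End K V) (hρ : IsRepMap K ρ) (hμ : IsRepMap K μ)
    (hrep₁ : Is3LieRep b₁ ρ) (hrep₂ : Is3LieRep b₂ μ) (hrepc : CompatRep b₁ b₂ ρ μ)
    (w₁ w₂ w₁' w₂' : G → G → G → V)
    (hco₁ : ∀ x₁ x₂ x₃ x₄ x₅ : G, CocycleExpr b₁ ρ w₁ x₁ x₂ x₃ x₄ x₅ = 0)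
    (hco₂ : ∀ x₁ x₂ x₃ x₄ x₅ : G, CocycleExpr b₂ μ w₂ x₁ x₂ x₃ x₄ x₅ = 0)
    (hco₃ : ∀ x₁ x₂ x₃ x₄ x₅ : G,
      CocycleExpr b₂ μ w₁ x₁ x₂ x₃ x₄ x₅ + CocycleExpr b₁ ρ w₂ x₁ x₂ x₃ x₄ x₅ = 0)
    (hco₁' : ∀ x₁ x₂ x₃ x₄ x₅ : G, CocycleExpr b₁ ρ w₁' x₁ x₂ x₃ x₄ x₅ = 0)
    (hco₂' : ∀ x₁ x₂ x₃ x₄ x₅ : G, CocycleExpr b₂ μ w₂' x₁ x₂ x₃ x₄ x₅ = 0)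
    (hco₃' : ∀ x₁ x₂ x₃ x₄ x₅ : G,
      CocycleExpr b₂ μ w₁' x₁ x₂ x₃ x₄ x₅ + CocycleExpr b₁ ρ w₂' x₁ x₂ x₃ x₄ x₅ = 0) :
    (∃ θ : (G × V) ≃ₗ[K] (G × V),
      (∀ u : V, θ (0, u) = (0, u)) ∧ (∀ q : G × V, (θ q).1 = q.1) ∧
      (∀ q r s : G × V,
        θ (extBracket b₁ ρ w₁ q r s) = extBracket b₁ ρ w₁' (θ q) (θ r) (θ s)) ∧
      (∀ q r s : G × V,
        θ (extBracket b₂ μ w₂ q r s) = extBracket b₂ μ w₂' (θ q) (θ r) (θ s))) ↔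
    (∃ τ : G →ₗ[K] V, ∀ x y z : G,
      (w₁ x y z - w₁' x y z =
        ρ x y (τ z) + ρ y z (τ x) + ρ z x (τ y) - τ (b₁ x y z)) ∧
      (w₂ x y z - w₂' x y z =
        μ x y (τ z) + μ y z (τ x) + μ z x (τ y) - τ (b₂ x y z))) := by

  constructor
  · rintro ⟨θ, hid, hpr, hb1, hb2⟩
    set τ : G →ₗ[K] V :=
      (LinearMap.snd K G V).comp (θ.toLinearMap.comp (LinearMap.inl K G V)) with hτdef
    have hτ : ∀ x : G, τ x = (θ (x, (0:V))).2 := fun x => rfl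
    have hθ0 : ∀ x : G, θ (x, (0:V)) = (x, τ x) := by
      intro x
      have h1 := hpr (x, (0:V))
      ext
      · exact h1
      · rw [hτ]
    have hθ : ∀ (x : G) (u : V), θ (x, u) = (x, τ x + u) := by
      intro x u
      have h1 : ((x, u) : G × V) = (x, (0:V)) + ((0:G), u) := by simp
      rw [h1, map_add, hθ0, hid]
      simp
    have key : ∀ (w w' : G → G → G → V) (σ : G → G → Module.End K V)
        (c : G → G → G → G),
        (∀ q r s : G × V,
          θ (extBracket c σ w q r s) = extBracket c σ w' (θ q) (θ r) (θ s)) →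
        ∀ x y z : G, w x y z - w' x y z =
          σ x y (τ z) + σ y z (τ x) + σ z x (τ y) - τ (c x y z) := by
      intro w w' σ c hb x y z
      have h := hb (x, 0) (y, 0) (z, 0)
      simp only [extBracket, map_zero, add_zero, zero_add, hθ] at h
      have h2 := (Prod.ext_iff.mp h).2
      rw [sub_eq_sub_iff_add_eq_add, add_comm]
      exact h2
    exact ⟨τ, fun x y z => ⟨key w₁ w₁' ρ b₁ hb1 x y z, key w₂ w₂' μ b₂ hb2 x y z⟩⟩
  · rintro ⟨τ, hτ⟩
    refine ⟨{ toFun := fun p => (p.1, τ p.1 + p.2),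
              invFun := fun p => (p.1, -τ p.1 + p.2),
              map_add' := ?_, map_smul' := ?_, left_inv := ?_, right_inv := ?_ },
            ?_, ?_, ?_, ?_⟩
    · intro p q
      simp only [Prod.fst_add, Prod.snd_add, map_add, Prod.mk_add_mk, Prod.mk.injEq]
      exact ⟨trivial, by abel⟩
    · intro c p
      simp only [Prod.smul_fst, Prod.smul_snd, map_smul, RingHom.id_apply, Prod.smul_mk,
        smul_add, Prod.mk.injEq]
    · intro p; simp
    · intro p; simp
    · intro u; simp
    · intro q; rfl
    all_goals {
      intro q r s
      simp only [LinearEquiv.coe_mk, LinearMap.coe_mk, AddHom.coe_mk, extBracket,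
        Prod.mk.injEq, map_add]
      refine ⟨trivial, ?_⟩
      first
      | (have h := (hτ q.1 r.1 s.1).1
         have h' : w₁ q.1 r.1 s.1 = w₁' q.1 r.1 s.1 + (ρ q.1 r.1 (τ s.1)
             + ρ r.1 s.1 (τ q.1) + ρ s.1 q.1 (τ r.1) - τ (b₁ q.1 r.1 s.1)) := by
           rw [← h]; abel
         rw [h']; abel)
      | (have h := (hτ q.1 r.1 s.1).2
         have h' : w₂ q.1 r.1 s.1 = w₂' q.1 r.1 s.1 + (μ q.1 r.1 (τ s.1)
             + μ r.1 s.1 (τ q.1) + μ s.1 q.1 (τ r.1) - τ (b₂ q.1 r.1 s.1)) := by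
           rw [← h]; abel
         rw [h']; abel)
    }
end

section
/- Let (g,[·,·,·]) be a 3-Lie algebra with structure map π and let N: g → g be a Nijenhuis operator with deformed structure π_N (i.e., π_N(x,y,z) = [x,y,z]_N). Then (g, π, π_N) is a compatible 3-Lie algebra if and only if the trilinear map [π,N](x,y,z) := [Nx,y,z] + [x,Ny,z] + [x,y,Nz] − N[x,y,z] is itself a 3-Lie algebra structure on g. -/
set_option maxHeartbeats 4000000 in
set_option maxHeartbeats 4000000 in
theorem stmt17 {K G : Type*} [Field K] [CharZero K] [AddCommGroup G] [Module K G]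
    (b : G → G → G → G) (h : Is3Lie K b) (N : G →ₗ[K] G) (hN : IsNijenhuis b N) :
    (Is3Lie K b ∧ Is3Lie K (deformedBracket b N) ∧ Compat b (deformedBracket b N)) ↔
    Is3Lie K (fun x y z => b (N x) y z + b x (N y) z + b x y (N z) - N (b x y z)) := by
  obtain ⟨htri, hskw, hfi⟩ := h
  obtain ⟨hl1, hl2, hl3⟩ := htri
  obtain ⟨hs12, hs23⟩ := hskw
  have b1add : ∀ u v y z : G, b (u + v) y z = b u y z + b v y z :=
    fun u v y z => (hl1 y z).map_add u v
  have b1sub : ∀ u v y z : G, b (u - v) y z = b u y z - b v y z :=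
    fun u v y z => (hl1 y z).map_sub u v
  have b1neg : ∀ u y z : G, b (-u) y z = - b u y z :=
    fun u y z => (hl1 y z).map_neg u
  have b1smul : ∀ (c : K) (u y z : G), b (c • u) y z = c • b u y z :=
    fun c u y z => (hl1 y z).map_smul c u
  have b2add : ∀ x u v z : G, b x (u + v) z = b x u z + b x v z :=
    fun x u v z => (hl2 x z).map_add u v
  have b2sub : ∀ x u v z : G, b x (u - v) z = b x u z - b x v z :=
    fun x u v z => (hl2 x z).map_sub u v
  have b2neg : ∀ x u z : G, b x (-u) z = - b x u z :=
    fun x u z => (hl2 x z).map_neg u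
  have b2smul : ∀ (c : K) (x u z : G), b x (c • u) z = c • b x u z :=
    fun c x u z => (hl2 x z).map_smul c u
  have b3add : ∀ x y u v : G, b x y (u + v) = b x y u + b x y v :=
    fun x y u v => (hl3 x y).map_add u v
  have b3sub : ∀ x y u v : G, b x y (u - v) = b x y u - b x y v :=
    fun x y u v => (hl3 x y).map_sub u v
  have b3neg : ∀ x y u : G, b x y (-u) = - b x y u :=
    fun x y u => (hl3 x y).map_neg u
  have b3smul : ∀ (c : K) (x y u : G), b x y (c • u) = c • b x y u :=
    fun c x y u => (hl3 x y).map_smul c u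
  have P3 : Is3Lie K (deformedBracket b N) := by
    refine ⟨⟨?_, ?_, ?_⟩, ⟨?_, ?_⟩, ?_⟩
    · intro y z
      exact ⟨fun u v => by
          simp only [deformedBracket, map_add, b1add, b2add, b3add]; module,
        fun c u => by
          simp only [deformedBracket, map_smul, b1smul, b2smul, b3smul]; module⟩
    · intro x z
      exact ⟨fun u v => by
          simp only [deformedBracket, map_add, b1add, b2add, b3add]; module,
        fun c u => by
          simp only [deformedBracket, map_smul, b1smul, b2smul, b3smul]; module⟩
    · intro x y
      exact ⟨fun u v => by
          simp only [deformedBracket, map_add, b1add, b2add, b3add]; module,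
        fun c u => by
          simp only [deformedBracket, map_smul, b1smul, b2smul, b3smul]; module⟩
    · intro x y z
      simp only [deformedBracket]
      have e1 := congrArg N (hs12 (N x) y z)
      have e2 := congrArg N (hs12 x (N y) z)
      have e3 := congrArg N (hs12 x y (N z))
      have e4 := congrArg N (congrArg N (hs12 x y z))
      simp only [map_neg] at e1 e2 e3 e4
      linear_combination (norm := abel1) hs12 (N x) (N y) z + hs12 x (N y) (N z)
        + hs12 (N x) y (N z) - e1 - e2 - e3 + e4
    · intro x y z
      simp only [deformedBracket]
      have e1 := congrArg N (hs23 (N x) y z)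
      have e2 := congrArg N (hs23 x (N y) z)
      have e3 := congrArg N (hs23 x y (N z))
      have e4 := congrArg N (congrArg N (hs23 x y z))
      simp only [map_neg] at e1 e2 e3 e4
      linear_combination (norm := abel1) hs23 (N x) (N y) z + hs23 x (N y) (N z)
        + hs23 (N x) y (N z) - e1 - e2 - e3 + e4
    · intro x1 x2 x3 x4 x5
      simp only [deformedBracket, map_add, map_sub, b1add, b1sub, b2add, b2sub, b3add, b3sub]
      have f1 := (congrArg N (congrArg N (congrArg N (congrArg N (hfi x1 x2 x3 x4 x5)))))
      simp only [map_add] at f1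
      have f2 := (congrArg N (congrArg N (congrArg N (hfi x1 x2 x3 x4 (N x5)))))
      simp only [map_add] at f2
      have f3 := (congrArg N (congrArg N (congrArg N (hfi x1 x2 x3 (N x4) x5))))
      simp only [map_add] at f3
      have f4 := (congrArg N (congrArg N (hfi x1 x2 x3 (N x4) (N x5))))
      simp only [map_add] at f4
      have f5 := (congrArg N (congrArg N (congrArg N (hfi x1 x2 (N x3) x4 x5))))
      simp only [map_add] at f5
      have f6 := (congrArg N (congrArg N (hfi x1 x2 (N x3) x4 (N x5))))
      simp only [map_add] at f6
      have f7 := (congrArg N (congrArg N (hfi x1 x2 (N x3) (N x4) x5)))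
      simp only [map_add] at f7
      have f8 := (congrArg N (hfi x1 x2 (N x3) (N x4) (N x5)))
      simp only [map_add] at f8
      have f9 := (congrArg N (congrArg N (congrArg N (hfi x1 (N x2) x3 x4 x5))))
      simp only [map_add] at f9
      have f10 := (congrArg N (congrArg N (hfi x1 (N x2) x3 x4 (N x5))))
      simp only [map_add] at f10
      have f11 := (congrArg N (congrArg N (hfi x1 (N x2) x3 (N x4) x5)))
      simp only [map_add] at f11
      have f12 := (congrArg N (hfi x1 (N x2) x3 (N x4) (N x5)))
      simp only [map_add] at f12
      have f13 := (congrArg N (congrArg N (hfi x1 (N x2) (N x3) x4 x5)))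
      simp only [map_add] at f13
      have f14 := (congrArg N (hfi x1 (N x2) (N x3) x4 (N x5)))
      simp only [map_add] at f14
      have f15 := (congrArg N (hfi x1 (N x2) (N x3) (N x4) x5))
      simp only [map_add] at f15
      have f16 := (congrArg N (congrArg N (congrArg N (hfi (N x1) x2 x3 x4 x5))))
      simp only [map_add] at f16
      have f17 := (congrArg N (congrArg N (hfi (N x1) x2 x3 x4 (N x5))))
      simp only [map_add] at f17
      have f18 := (congrArg N (congrArg N (hfi (N x1) x2 x3 (N x4) x5)))
      simp only [map_add] at f18
      have f19 := (congrArg N (hfi (N x1) x2 x3 (N x4) (N x5)))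
      simp only [map_add] at f19
      have f20 := (congrArg N (congrArg N (hfi (N x1) x2 (N x3) x4 x5)))
      simp only [map_add] at f20
      have f21 := (congrArg N (hfi (N x1) x2 (N x3) x4 (N x5)))
      simp only [map_add] at f21
      have f22 := (congrArg N (hfi (N x1) x2 (N x3) (N x4) x5))
      simp only [map_add] at f22
      have f23 := (congrArg N (congrArg N (hfi (N x1) (N x2) x3 x4 x5)))
      simp only [map_add] at f23
      have f24 := (congrArg N (hfi (N x1) (N x2) x3 x4 (N x5)))
      simp only [map_add] at f24
      have f25 := (congrArg N (hfi (N x1) (N x2) x3 (N x4) x5))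
      simp only [map_add] at f25
      have f26 := (congrArg N (hfi (N x1) (N x2) (N x3) x4 x5))
      simp only [map_add] at f26
      have g27 := (hN x1 x2 (b x3 x4 (N x5)))
      simp only [map_add, map_sub] at g27
      have g28 := (hN x1 x2 (b x3 (N x4) x5))
      simp only [map_add, map_sub] at g28
      have g29 := (congrArg N (hN x1 x2 (b x3 x4 x5)))
      simp only [map_add, map_sub] at g29
      have g30 := (hN x3 x4 (b x1 x2 (N x5)))
      simp only [map_add, map_sub] at g30
      have g31 := (hN x3 x5 (b x1 x2 (N x4)))
      simp only [map_add, map_sub] at g31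
      have g32 := (hN x3 x5 (b x1 (N x2) x4))
      simp only [map_add, map_sub] at g32
      have g33 := (hN x3 x4 (b x1 (N x2) x5))
      simp only [map_add, map_sub] at g33
      have g34 := (hN x1 x2 (b (N x3) x4 x5))
      simp only [map_add, map_sub] at g34
      have w35 := congrArg (fun t => N (b x1 x2 t)) (hN x3 x4 x5)
      simp only [map_add, map_sub, b3add, b3sub] at w35
      have w36 := congrArg (fun t => b x1 (N x2) t) (hN x3 x4 x5)
      simp only [map_add, map_sub, b3add, b3sub] at w36
      have g37 := (hN x3 x4 (b (N x1) x2 x5))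
      simp only [map_add, map_sub] at g37
      have w38 := congrArg (fun t => N (b x3 x4 t)) (hN x1 x2 x5)
      simp only [map_add, map_sub, b3add, b3sub] at w38
      have w39 := congrArg (fun t => N (b x3 x5 t)) (hN x1 x2 x4)
      simp only [map_add, map_sub, b3add, b3sub] at w39
      have w40 := congrArg (fun t => b x3 (N x5) t) (hN x1 x2 x4)
      simp only [map_add, map_sub, b3add, b3sub] at w40
      have w41 := congrArg (fun t => b x3 (N x4) t) (hN x1 x2 x5)
      simp only [map_add, map_sub, b3add, b3sub] at w41
      have g42 := (congrArg N (hN x3 x5 (b x1 x2 x4)))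
      simp only [map_add, map_sub] at g42
      have g43 := (hN x4 x5 (b x1 x2 (N x3)))
      simp only [map_add, map_sub] at g43
      have g44 := (hN x4 x5 (b x1 (N x2) x3))
      simp only [map_add, map_sub] at g44
      have g45 := (hN x3 x5 (b (N x1) x2 x4))
      simp only [map_add, map_sub] at g45
      have g46 := (hN x4 x5 (b (N x1) x2 x3))
      simp only [map_add, map_sub] at g46
      have w47 := congrArg (fun t => N (b x4 x5 t)) (hN x1 x2 x3)
      simp only [map_add, map_sub, b3add, b3sub] at w47
      have w48 := congrArg (fun t => b (N x3) x4 t) (hN x1 x2 x5)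
      simp only [map_add, map_sub, b3add, b3sub] at w48
      have w49 := congrArg (fun t => b (N x3) x5 t) (hN x1 x2 x4)
      simp only [map_add, map_sub, b3add, b3sub] at w49
      have g50 := (congrArg N (hN x3 x4 (b x1 x2 x5)))
      simp only [map_add, map_sub] at g50
      have g51 := (congrArg N (hN x4 x5 (b x1 x2 x3)))
      simp only [map_add, map_sub] at g51
      have g52 := (hN x4 x5 (N (b x1 x2 x3)))
      simp only [map_add, map_sub] at g52
      have g53 := (hN x3 x5 (N (b x1 x2 x4)))
      simp only [map_add, map_sub] at g53
      have g54 := (hN x3 x4 (N (b x1 x2 x5)))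
      simp only [map_add, map_sub] at g54
      have g55 := (hN x1 x2 (N (b x3 x4 x5)))
      simp only [map_add, map_sub] at g55
      have w56 := congrArg (fun t => b (N x1) x2 t) (hN x3 x4 x5)
      simp only [map_add, map_sub, b3add, b3sub] at w56
      have w57 := congrArg (fun t => b x4 (N x5) t) (hN x1 x2 x3)
      simp only [map_add, map_sub, b3add, b3sub] at w57
      have w58 := congrArg (fun t => b (N x4) x5 t) (hN x1 x2 x3)
      simp only [map_add, map_sub, b3add, b3sub] at w58
      have s59 := congrArg (fun t => (N t)) (hs12 (N x3) (N (b (N x1) x2 x4)) x5)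
      simp only [map_neg, b1neg, b2neg, b3neg] at s59
      have s60 := congrArg (fun t => (N t)) (hs12 (N x3) (N (b x1 (N x2) x4)) x5)
      simp only [map_neg, b1neg, b2neg, b3neg] at s60
      have s61 := congrArg (fun t => (N t)) (hs12 (N x3) (N (b x1 x2 (N x4))) x5)
      simp only [map_neg, b1neg, b2neg, b3neg] at s61
      have s62 := congrArg (fun t => (N t)) (hs12 (N x3) (N (N (b x1 x2 x4))) x5)
      simp only [map_neg, b1neg, b2neg, b3neg] at s62
      have s63 := congrArg (fun t => (N t)) (hs12 x3 (N (b (N x1) (N x2) x4)) x5)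
      simp only [map_neg, b1neg, b2neg, b3neg] at s63
      have s64 := congrArg (fun t => (N t)) (hs12 x3 (N (b x1 (N x2) (N x4))) x5)
      simp only [map_neg, b1neg, b2neg, b3neg] at s64
      have s65 := congrArg (fun t => (N t)) (hs12 x3 (N (b (N x1) x2 (N x4))) x5)
      simp only [map_neg, b1neg, b2neg, b3neg] at s65
      have s66 := congrArg (fun t => (N t)) (hs12 x3 (N (N (b (N x1) x2 x4))) x5)
      simp only [map_neg, b1neg, b2neg, b3neg] at s66
      have s67 := congrArg (fun t => (N t)) (hs12 x3 (N (N (b x1 (N x2) x4))) x5)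
      simp only [map_neg, b1neg, b2neg, b3neg] at s67
      have s68 := congrArg (fun t => (N t)) (hs12 x3 (N (N (b x1 x2 (N x4)))) x5)
      simp only [map_neg, b1neg, b2neg, b3neg] at s68
      have s69 := congrArg (fun t => (N t)) (hs12 x3 (N (N (N (b x1 x2 x4)))) x5)
      simp only [map_neg, b1neg, b2neg, b3neg] at s69
      have s70 := congrArg (fun t => (N t)) (hs12 x3 (N (b (N x1) x2 x4)) (N x5))
      simp only [map_neg, b1neg, b2neg, b3neg] at s70
      have s71 := congrArg (fun t => (N t)) (hs12 x3 (N (b x1 (N x2) x4)) (N x5))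
      simp only [map_neg, b1neg, b2neg, b3neg] at s71
      have s72 := congrArg (fun t => (N t)) (hs12 x3 (N (b x1 x2 (N x4))) (N x5))
      simp only [map_neg, b1neg, b2neg, b3neg] at s72
      have s73 := congrArg (fun t => (N t)) (hs12 x3 (N (N (b x1 x2 x4))) (N x5))
      simp only [map_neg, b1neg, b2neg, b3neg] at s73
      have s74 := congrArg (fun t => (N (N t))) (hs12 x3 (N (b (N x1) x2 x4)) x5)
      simp only [map_neg, b1neg, b2neg, b3neg] at s74
      have s75 := congrArg (fun t => (N (N t))) (hs12 x3 (N (b x1 (N x2) x4)) x5)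
      simp only [map_neg, b1neg, b2neg, b3neg] at s75
      have s76 := congrArg (fun t => (N (N t))) (hs12 x3 (N (b x1 x2 (N x4))) x5)
      simp only [map_neg, b1neg, b2neg, b3neg] at s76
      have s77 := congrArg (fun t => (N (N t))) (hs12 x3 (N (N (b x1 x2 x4))) x5)
      simp only [map_neg, b1neg, b2neg, b3neg] at s77
      have s78 := congrArg (fun t => (N (N (N (N t))))) (hs12 x3 (b x1 x2 x4) x5)
      simp only [map_neg, b1neg, b2neg, b3neg] at s78
      have s79 := congrArg (fun t => (N (N (N t)))) (hs12 x3 (b x1 x2 x4) (N x5))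
      simp only [map_neg, b1neg, b2neg, b3neg] at s79
      have s80 := congrArg (fun t => (N (N (N t)))) (hs12 x3 (b x1 x2 (N x4)) x5)
      simp only [map_neg, b1neg, b2neg, b3neg] at s80
      have s81 := congrArg (fun t => (N (N t))) (hs12 x3 (b x1 x2 (N x4)) (N x5))
      simp only [map_neg, b1neg, b2neg, b3neg] at s81
      have s82 := congrArg (fun t => (N (N (N t)))) (hs12 (N x3) (b x1 x2 x4) x5)
      simp only [map_neg, b1neg, b2neg, b3neg] at s82
      have s83 := congrArg (fun t => (N (N t))) (hs12 (N x3) (b x1 x2 x4) (N x5))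
      simp only [map_neg, b1neg, b2neg, b3neg] at s83
      have s84 := congrArg (fun t => (N (N t))) (hs12 (N x3) (b x1 x2 (N x4)) x5)
      simp only [map_neg, b1neg, b2neg, b3neg] at s84
      have s85 := congrArg (fun t => (N t)) (hs12 (N x3) (b x1 x2 (N x4)) (N x5))
      simp only [map_neg, b1neg, b2neg, b3neg] at s85
      have s86 := congrArg (fun t => (N (N (N t)))) (hs12 x3 (b x1 (N x2) x4) x5)
      simp only [map_neg, b1neg, b2neg, b3neg] at s86
      have s87 := congrArg (fun t => (N (N t))) (hs12 x3 (b x1 (N x2) x4) (N x5))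
      simp only [map_neg, b1neg, b2neg, b3neg] at s87
      have s88 := congrArg (fun t => (N (N t))) (hs12 (N x3) (b x1 (N x2) x4) x5)
      simp only [map_neg, b1neg, b2neg, b3neg] at s88
      have s89 := congrArg (fun t => (N t)) (hs12 (N x3) (b x1 (N x2) x4) (N x5))
      simp only [map_neg, b1neg, b2neg, b3neg] at s89
      have s90 := congrArg (fun t => (N (N (N t)))) (hs12 x3 (b (N x1) x2 x4) x5)
      simp only [map_neg, b1neg, b2neg, b3neg] at s90
      have s91 := congrArg (fun t => (N (N t))) (hs12 x3 (b (N x1) x2 x4) (N x5))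
      simp only [map_neg, b1neg, b2neg, b3neg] at s91
      have s92 := congrArg (fun t => (N (N t))) (hs12 (N x3) (b (N x1) x2 x4) x5)
      simp only [map_neg, b1neg, b2neg, b3neg] at s92
      have s93 := congrArg (fun t => (N t)) (hs12 (N x3) (b (N x1) x2 x4) (N x5))
      simp only [map_neg, b1neg, b2neg, b3neg] at s93
      have s94 := congrArg (fun t => (N t)) (hs12 x3 (b (N x1) (N x2) (N x4)) x5)
      simp only [map_neg, b1neg, b2neg, b3neg] at s94
      have s95 := congrArg (fun t => (N t)) (hs23 (N x3) (N x5) (b x1 x2 (N x4)))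
      simp only [map_neg, b1neg, b2neg, b3neg] at s95
      have s96 := congrArg (fun t => (N t)) (hs23 x3 (N x5) (N (b x1 x2 (N x4))))
      simp only [map_neg, b1neg, b2neg, b3neg] at s96
      have s97 := congrArg (fun t => (N t)) (hs23 (N x3) x5 (N (b x1 x2 (N x4))))
      simp only [map_neg, b1neg, b2neg, b3neg] at s97
      have s98 := congrArg (fun t => (N (N t))) (hs23 (N x3) x5 (b x1 x2 (N x4)))
      simp only [map_neg, b1neg, b2neg, b3neg] at s98
      have s99 := congrArg (fun t => (N (N t))) (hs23 x3 (N x5) (b x1 x2 (N x4)))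
      simp only [map_neg, b1neg, b2neg, b3neg] at s99
      have s100 := congrArg (fun t => (N (N t))) (hs23 x3 x5 (N (b x1 x2 (N x4))))
      simp only [map_neg, b1neg, b2neg, b3neg] at s100
      have s101 := congrArg (fun t => (N (N (N t)))) (hs23 x3 x5 (b x1 x2 (N x4)))
      simp only [map_neg, b1neg, b2neg, b3neg] at s101
      have s102 := congrArg (fun t => (N t)) (hs23 (N x3) (N x5) (b x1 (N x2) x4))
      simp only [map_neg, b1neg, b2neg, b3neg] at s102
      have s103 := congrArg (fun t => (N t)) (hs23 x3 (N x5) (N (b x1 (N x2) x4)))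
      simp only [map_neg, b1neg, b2neg, b3neg] at s103
      have s104 := congrArg (fun t => (N t)) (hs23 (N x3) x5 (N (b x1 (N x2) x4)))
      simp only [map_neg, b1neg, b2neg, b3neg] at s104
      have s105 := congrArg (fun t => (N (N t))) (hs23 (N x3) x5 (b x1 (N x2) x4))
      simp only [map_neg, b1neg, b2neg, b3neg] at s105
      have s106 := congrArg (fun t => (N (N t))) (hs23 x3 (N x5) (b x1 (N x2) x4))
      simp only [map_neg, b1neg, b2neg, b3neg] at s106
      have s107 := congrArg (fun t => (N (N t))) (hs23 x3 x5 (N (b x1 (N x2) x4)))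
      simp only [map_neg, b1neg, b2neg, b3neg] at s107
      have s108 := congrArg (fun t => (N (N (N t)))) (hs23 x3 x5 (b x1 (N x2) x4))
      simp only [map_neg, b1neg, b2neg, b3neg] at s108
      have s109 := congrArg (fun t => (N t)) (hs23 x3 x5 (b (N x1) (N x2) (N x4)))
      simp only [map_neg, b1neg, b2neg, b3neg] at s109
      have s110 := congrArg (fun t => (N t)) (hs23 x3 x5 (N (b (N x1) (N x2) x4)))
      simp only [map_neg, b1neg, b2neg, b3neg] at s110
      have s111 := congrArg (fun t => (N t)) (hs23 x3 x5 (N (b x1 (N x2) (N x4))))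
      simp only [map_neg, b1neg, b2neg, b3neg] at s111
      have s112 := congrArg (fun t => (N t)) (hs23 x3 x5 (N (b (N x1) x2 (N x4))))
      simp only [map_neg, b1neg, b2neg, b3neg] at s112
      have s113 := congrArg (fun t => (N t)) (hs23 x3 x5 (N (N (b (N x1) x2 x4))))
      simp only [map_neg, b1neg, b2neg, b3neg] at s113
      have s114 := congrArg (fun t => (N t)) (hs23 x3 x5 (N (N (b x1 (N x2) x4))))
      simp only [map_neg, b1neg, b2neg, b3neg] at s114
      have s115 := congrArg (fun t => (N t)) (hs23 x3 x5 (N (N (b x1 x2 (N x4)))))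
      simp only [map_neg, b1neg, b2neg, b3neg] at s115
      have s116 := congrArg (fun t => (N t)) (hs23 x3 x5 (N (N (N (b x1 x2 x4)))))
      simp only [map_neg, b1neg, b2neg, b3neg] at s116
      have s117 := congrArg (fun t => (N (N t))) (hs23 (N x3) (N x5) (b x1 x2 x4))
      simp only [map_neg, b1neg, b2neg, b3neg] at s117
      have s118 := congrArg (fun t => (N (N (N t)))) (hs23 (N x3) x5 (b x1 x2 x4))
      simp only [map_neg, b1neg, b2neg, b3neg] at s118
      have s119 := congrArg (fun t => (N (N (N t)))) (hs23 x3 (N x5) (b x1 x2 x4))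
      simp only [map_neg, b1neg, b2neg, b3neg] at s119
      have s120 := congrArg (fun t => (N (N (N (N t))))) (hs23 x3 x5 (b x1 x2 x4))
      simp only [map_neg, b1neg, b2neg, b3neg] at s120
      have s121 := congrArg (fun t => (N t)) (hs23 (N x4) (N x5) (b x1 x2 (N x3)))
      simp only [map_neg, b1neg, b2neg, b3neg] at s121
      have s122 := congrArg (fun t => (N t)) (hs23 x4 (N x5) (N (b x1 x2 (N x3))))
      simp only [map_neg, b1neg, b2neg, b3neg] at s122
      have s123 := congrArg (fun t => (N t)) (hs23 (N x4) x5 (N (b x1 x2 (N x3))))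
      simp only [map_neg, b1neg, b2neg, b3neg] at s123
      have s124 := congrArg (fun t => (N (N t))) (hs23 (N x4) x5 (b x1 x2 (N x3)))
      simp only [map_neg, b1neg, b2neg, b3neg] at s124
      have s125 := congrArg (fun t => (N (N t))) (hs23 x4 (N x5) (b x1 x2 (N x3)))
      simp only [map_neg, b1neg, b2neg, b3neg] at s125
      have s126 := congrArg (fun t => (N (N t))) (hs23 x4 x5 (N (b x1 x2 (N x3))))
      simp only [map_neg, b1neg, b2neg, b3neg] at s126
      have s127 := congrArg (fun t => (N (N (N t)))) (hs23 x4 x5 (b x1 x2 (N x3)))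
      simp only [map_neg, b1neg, b2neg, b3neg] at s127
      have s128 := congrArg (fun t => (N t)) (hs23 (N x4) (N x5) (b x1 (N x2) x3))
      simp only [map_neg, b1neg, b2neg, b3neg] at s128
      have s129 := congrArg (fun t => (N t)) (hs23 x4 (N x5) (N (b x1 (N x2) x3)))
      simp only [map_neg, b1neg, b2neg, b3neg] at s129
      have s130 := congrArg (fun t => (N t)) (hs23 (N x4) x5 (N (b x1 (N x2) x3)))
      simp only [map_neg, b1neg, b2neg, b3neg] at s130
      have s131 := congrArg (fun t => (N (N t))) (hs23 (N x4) x5 (b x1 (N x2) x3))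
      simp only [map_neg, b1neg, b2neg, b3neg] at s131
      have s132 := congrArg (fun t => (N (N t))) (hs23 x4 (N x5) (b x1 (N x2) x3))
      simp only [map_neg, b1neg, b2neg, b3neg] at s132
      have s133 := congrArg (fun t => (N (N t))) (hs23 x4 x5 (N (b x1 (N x2) x3)))
      simp only [map_neg, b1neg, b2neg, b3neg] at s133
      have s134 := congrArg (fun t => (N (N (N t)))) (hs23 x4 x5 (b x1 (N x2) x3))
      simp only [map_neg, b1neg, b2neg, b3neg] at s134
      have s135 := congrArg (fun t => (N t)) (hs23 (N x3) (N x5) (b (N x1) x2 x4))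
      simp only [map_neg, b1neg, b2neg, b3neg] at s135
      have s136 := congrArg (fun t => (N t)) (hs23 x3 (N x5) (N (b (N x1) x2 x4)))
      simp only [map_neg, b1neg, b2neg, b3neg] at s136
      have s137 := congrArg (fun t => (N t)) (hs23 (N x3) x5 (N (b (N x1) x2 x4)))
      simp only [map_neg, b1neg, b2neg, b3neg] at s137
      have s138 := congrArg (fun t => (N (N t))) (hs23 (N x3) x5 (b (N x1) x2 x4))
      simp only [map_neg, b1neg, b2neg, b3neg] at s138
      have s139 := congrArg (fun t => (N (N t))) (hs23 x3 (N x5) (b (N x1) x2 x4))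
      simp only [map_neg, b1neg, b2neg, b3neg] at s139
      have s140 := congrArg (fun t => (N (N t))) (hs23 x3 x5 (N (b (N x1) x2 x4)))
      simp only [map_neg, b1neg, b2neg, b3neg] at s140
      have s141 := congrArg (fun t => (N (N (N t)))) (hs23 x3 x5 (b (N x1) x2 x4))
      simp only [map_neg, b1neg, b2neg, b3neg] at s141
      have s142 := congrArg (fun t => (N t)) (hs23 (N x4) (N x5) (b (N x1) x2 x3))
      simp only [map_neg, b1neg, b2neg, b3neg] at s142
      have s143 := congrArg (fun t => (N t)) (hs23 x4 (N x5) (N (b (N x1) x2 x3)))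
      simp only [map_neg, b1neg, b2neg, b3neg] at s143
      have s144 := congrArg (fun t => (N t)) (hs23 (N x4) x5 (N (b (N x1) x2 x3)))
      simp only [map_neg, b1neg, b2neg, b3neg] at s144
      have s145 := congrArg (fun t => (N (N t))) (hs23 (N x4) x5 (b (N x1) x2 x3))
      simp only [map_neg, b1neg, b2neg, b3neg] at s145
      have s146 := congrArg (fun t => (N (N t))) (hs23 x4 (N x5) (b (N x1) x2 x3))
      simp only [map_neg, b1neg, b2neg, b3neg] at s146
      have s147 := congrArg (fun t => (N (N t))) (hs23 x4 x5 (N (b (N x1) x2 x3)))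
      simp only [map_neg, b1neg, b2neg, b3neg] at s147
      have s148 := congrArg (fun t => (N (N (N t)))) (hs23 x4 x5 (b (N x1) x2 x3))
      simp only [map_neg, b1neg, b2neg, b3neg] at s148
      have s149 := congrArg (fun t => (N t)) (hs23 x4 x5 (b (N x1) (N x2) (N x3)))
      simp only [map_neg, b1neg, b2neg, b3neg] at s149
      have s150 := congrArg (fun t => (N t)) (hs23 x4 x5 (N (b (N x1) (N x2) x3)))
      simp only [map_neg, b1neg, b2neg, b3neg] at s150
      have s151 := congrArg (fun t => (N t)) (hs23 x4 x5 (N (b x1 (N x2) (N x3))))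
      simp only [map_neg, b1neg, b2neg, b3neg] at s151
      have s152 := congrArg (fun t => (N t)) (hs23 x4 x5 (N (b (N x1) x2 (N x3))))
      simp only [map_neg, b1neg, b2neg, b3neg] at s152
      have s153 := congrArg (fun t => (N t)) (hs23 x4 x5 (N (N (b (N x1) x2 x3))))
      simp only [map_neg, b1neg, b2neg, b3neg] at s153
      have s154 := congrArg (fun t => (N t)) (hs23 x4 x5 (N (N (b x1 (N x2) x3))))
      simp only [map_neg, b1neg, b2neg, b3neg] at s154
      have s155 := congrArg (fun t => (N t)) (hs23 x4 x5 (N (N (b x1 x2 (N x3)))))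
      simp only [map_neg, b1neg, b2neg, b3neg] at s155
      have s156 := congrArg (fun t => (N t)) (hs23 x4 x5 (N (N (N (b x1 x2 x3)))))
      simp only [map_neg, b1neg, b2neg, b3neg] at s156
      have s157 := congrArg (fun t => (N (N t))) (hs23 (N x4) (N x5) (b x1 x2 x3))
      simp only [map_neg, b1neg, b2neg, b3neg] at s157
      have s158 := congrArg (fun t => (N (N (N t)))) (hs23 (N x4) x5 (b x1 x2 x3))
      simp only [map_neg, b1neg, b2neg, b3neg] at s158
      have s159 := congrArg (fun t => (N (N (N t)))) (hs23 x4 (N x5) (b x1 x2 x3))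
      simp only [map_neg, b1neg, b2neg, b3neg] at s159
      have s160 := congrArg (fun t => (N (N (N (N t))))) (hs23 x4 x5 (b x1 x2 x3))
      simp only [map_neg, b1neg, b2neg, b3neg] at s160
      have s161 := congrArg (fun t => (N t)) (hs23 x4 (N x5) (N (N (b x1 x2 x3))))
      simp only [map_neg, b1neg, b2neg, b3neg] at s161
      have s162 := congrArg (fun t => (N t)) (hs23 (N x4) x5 (N (N (b x1 x2 x3))))
      simp only [map_neg, b1neg, b2neg, b3neg] at s162
      have s163 := congrArg (fun t => (N (N t))) (hs23 x4 x5 (N (N (b x1 x2 x3))))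
      simp only [map_neg, b1neg, b2neg, b3neg] at s163
      have s164 := congrArg (fun t => (N t)) (hs23 x3 (N x5) (N (N (b x1 x2 x4))))
      simp only [map_neg, b1neg, b2neg, b3neg] at s164
      have s165 := congrArg (fun t => (N t)) (hs23 (N x3) x5 (N (N (b x1 x2 x4))))
      simp only [map_neg, b1neg, b2neg, b3neg] at s165
      have s166 := congrArg (fun t => (N (N t))) (hs23 x3 x5 (N (N (b x1 x2 x4))))
      simp only [map_neg, b1neg, b2neg, b3neg] at s166
      have s167 := congrArg (fun t => (N t)) (hs12 (N x3) (b x1 x2 (N x4)) (N x5))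
      simp only [map_neg, b1neg, b2neg, b3neg] at s167
      have s168 := congrArg (fun t => (N t)) (hs12 x3 (N (b x1 x2 (N x4))) (N x5))
      simp only [map_neg, b1neg, b2neg, b3neg] at s168
      have s169 := congrArg (fun t => (N t)) (hs12 (N x3) (N (b x1 x2 (N x4))) x5)
      simp only [map_neg, b1neg, b2neg, b3neg] at s169
      have s170 := congrArg (fun t => (N (N t))) (hs12 (N x3) (b x1 x2 (N x4)) x5)
      simp only [map_neg, b1neg, b2neg, b3neg] at s170
      have s171 := congrArg (fun t => (N (N t))) (hs12 x3 (b x1 x2 (N x4)) (N x5))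
      simp only [map_neg, b1neg, b2neg, b3neg] at s171
      have s172 := congrArg (fun t => (N (N t))) (hs12 x3 (N (b x1 x2 (N x4))) x5)
      simp only [map_neg, b1neg, b2neg, b3neg] at s172
      have s173 := congrArg (fun t => (N (N (N t)))) (hs12 x3 (b x1 x2 (N x4)) x5)
      simp only [map_neg, b1neg, b2neg, b3neg] at s173
      have s174 := congrArg (fun t => (N t)) (hs12 (N x3) (b x1 (N x2) x4) (N x5))
      simp only [map_neg, b1neg, b2neg, b3neg] at s174
      have s175 := congrArg (fun t => (N t)) (hs12 x3 (N (b x1 (N x2) x4)) (N x5))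
      simp only [map_neg, b1neg, b2neg, b3neg] at s175
      have s176 := congrArg (fun t => (N t)) (hs12 (N x3) (N (b x1 (N x2) x4)) x5)
      simp only [map_neg, b1neg, b2neg, b3neg] at s176
      have s177 := congrArg (fun t => (N (N t))) (hs12 (N x3) (b x1 (N x2) x4) x5)
      simp only [map_neg, b1neg, b2neg, b3neg] at s177
      have s178 := congrArg (fun t => (N (N t))) (hs12 x3 (b x1 (N x2) x4) (N x5))
      simp only [map_neg, b1neg, b2neg, b3neg] at s178
      have s179 := congrArg (fun t => (N (N t))) (hs12 x3 (N (b x1 (N x2) x4)) x5)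
      simp only [map_neg, b1neg, b2neg, b3neg] at s179
      have s180 := congrArg (fun t => (N (N (N t)))) (hs12 x3 (b x1 (N x2) x4) x5)
      simp only [map_neg, b1neg, b2neg, b3neg] at s180
      have s181 := congrArg (fun t => (N t)) (hs12 x3 (b (N x1) (N x2) (N x4)) x5)
      simp only [map_neg, b1neg, b2neg, b3neg] at s181
      have s182 := congrArg (fun t => (N t)) (hs12 x3 (N (b (N x1) (N x2) x4)) x5)
      simp only [map_neg, b1neg, b2neg, b3neg] at s182
      have s183 := congrArg (fun t => (N t)) (hs12 x3 (N (b x1 (N x2) (N x4))) x5)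
      simp only [map_neg, b1neg, b2neg, b3neg] at s183
      have s184 := congrArg (fun t => (N t)) (hs12 x3 (N (b (N x1) x2 (N x4))) x5)
      simp only [map_neg, b1neg, b2neg, b3neg] at s184
      have s185 := congrArg (fun t => (N t)) (hs12 x3 (N (N (b (N x1) x2 x4))) x5)
      simp only [map_neg, b1neg, b2neg, b3neg] at s185
      have s186 := congrArg (fun t => (N t)) (hs12 x3 (N (N (b x1 (N x2) x4))) x5)
      simp only [map_neg, b1neg, b2neg, b3neg] at s186
      have s187 := congrArg (fun t => (N t)) (hs12 x3 (N (N (b x1 x2 (N x4)))) x5)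
      simp only [map_neg, b1neg, b2neg, b3neg] at s187
      have s188 := congrArg (fun t => (N t)) (hs12 x3 (N (N (N (b x1 x2 x4)))) x5)
      simp only [map_neg, b1neg, b2neg, b3neg] at s188
      have s189 := congrArg (fun t => (N (N t))) (hs12 (N x3) (b x1 x2 x4) (N x5))
      simp only [map_neg, b1neg, b2neg, b3neg] at s189
      have s190 := congrArg (fun t => (N (N (N t)))) (hs12 (N x3) (b x1 x2 x4) x5)
      simp only [map_neg, b1neg, b2neg, b3neg] at s190
      have s191 := congrArg (fun t => (N (N (N t)))) (hs12 x3 (b x1 x2 x4) (N x5))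
      simp only [map_neg, b1neg, b2neg, b3neg] at s191
      have s192 := congrArg (fun t => (N (N (N (N t))))) (hs12 x3 (b x1 x2 x4) x5)
      simp only [map_neg, b1neg, b2neg, b3neg] at s192
      have s193 := congrArg (fun t => (N t)) (hs12 (N x4) (b x1 x2 (N x3)) (N x5))
      simp only [map_neg, b1neg, b2neg, b3neg] at s193
      have s194 := congrArg (fun t => (N t)) (hs12 x4 (N (b x1 x2 (N x3))) (N x5))
      simp only [map_neg, b1neg, b2neg, b3neg] at s194
      have s195 := congrArg (fun t => (N t)) (hs12 (N x4) (N (b x1 x2 (N x3))) x5)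
      simp only [map_neg, b1neg, b2neg, b3neg] at s195
      have s196 := congrArg (fun t => (N (N t))) (hs12 (N x4) (b x1 x2 (N x3)) x5)
      simp only [map_neg, b1neg, b2neg, b3neg] at s196
      have s197 := congrArg (fun t => (N (N t))) (hs12 x4 (b x1 x2 (N x3)) (N x5))
      simp only [map_neg, b1neg, b2neg, b3neg] at s197
      have s198 := congrArg (fun t => (N (N t))) (hs12 x4 (N (b x1 x2 (N x3))) x5)
      simp only [map_neg, b1neg, b2neg, b3neg] at s198
      have s199 := congrArg (fun t => (N (N (N t)))) (hs12 x4 (b x1 x2 (N x3)) x5)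
      simp only [map_neg, b1neg, b2neg, b3neg] at s199
      have s200 := congrArg (fun t => (N t)) (hs12 (N x4) (b x1 (N x2) x3) (N x5))
      simp only [map_neg, b1neg, b2neg, b3neg] at s200
      have s201 := congrArg (fun t => (N t)) (hs12 x4 (N (b x1 (N x2) x3)) (N x5))
      simp only [map_neg, b1neg, b2neg, b3neg] at s201
      have s202 := congrArg (fun t => (N t)) (hs12 (N x4) (N (b x1 (N x2) x3)) x5)
      simp only [map_neg, b1neg, b2neg, b3neg] at s202
      have s203 := congrArg (fun t => (N (N t))) (hs12 (N x4) (b x1 (N x2) x3) x5)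
      simp only [map_neg, b1neg, b2neg, b3neg] at s203
      have s204 := congrArg (fun t => (N (N t))) (hs12 x4 (b x1 (N x2) x3) (N x5))
      simp only [map_neg, b1neg, b2neg, b3neg] at s204
      have s205 := congrArg (fun t => (N (N t))) (hs12 x4 (N (b x1 (N x2) x3)) x5)
      simp only [map_neg, b1neg, b2neg, b3neg] at s205
      have s206 := congrArg (fun t => (N (N (N t)))) (hs12 x4 (b x1 (N x2) x3) x5)
      simp only [map_neg, b1neg, b2neg, b3neg] at s206
      have s207 := congrArg (fun t => (N t)) (hs12 (N x3) (b (N x1) x2 x4) (N x5))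
      simp only [map_neg, b1neg, b2neg, b3neg] at s207
      have s208 := congrArg (fun t => (N t)) (hs12 x3 (N (b (N x1) x2 x4)) (N x5))
      simp only [map_neg, b1neg, b2neg, b3neg] at s208
      have s209 := congrArg (fun t => (N t)) (hs12 (N x3) (N (b (N x1) x2 x4)) x5)
      simp only [map_neg, b1neg, b2neg, b3neg] at s209
      have s210 := congrArg (fun t => (N (N t))) (hs12 (N x3) (b (N x1) x2 x4) x5)
      simp only [map_neg, b1neg, b2neg, b3neg] at s210
      have s211 := congrArg (fun t => (N (N t))) (hs12 x3 (b (N x1) x2 x4) (N x5))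
      simp only [map_neg, b1neg, b2neg, b3neg] at s211
      have s212 := congrArg (fun t => (N (N t))) (hs12 x3 (N (b (N x1) x2 x4)) x5)
      simp only [map_neg, b1neg, b2neg, b3neg] at s212
      have s213 := congrArg (fun t => (N (N (N t)))) (hs12 x3 (b (N x1) x2 x4) x5)
      simp only [map_neg, b1neg, b2neg, b3neg] at s213
      have s214 := congrArg (fun t => (N t)) (hs12 (N x4) (b (N x1) x2 x3) (N x5))
      simp only [map_neg, b1neg, b2neg, b3neg] at s214
      have s215 := congrArg (fun t => (N t)) (hs12 x4 (N (b (N x1) x2 x3)) (N x5))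
      simp only [map_neg, b1neg, b2neg, b3neg] at s215
      have s216 := congrArg (fun t => (N t)) (hs12 (N x4) (N (b (N x1) x2 x3)) x5)
      simp only [map_neg, b1neg, b2neg, b3neg] at s216
      have s217 := congrArg (fun t => (N (N t))) (hs12 (N x4) (b (N x1) x2 x3) x5)
      simp only [map_neg, b1neg, b2neg, b3neg] at s217
      have s218 := congrArg (fun t => (N (N t))) (hs12 x4 (b (N x1) x2 x3) (N x5))
      simp only [map_neg, b1neg, b2neg, b3neg] at s218
      have s219 := congrArg (fun t => (N (N t))) (hs12 x4 (N (b (N x1) x2 x3)) x5)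
      simp only [map_neg, b1neg, b2neg, b3neg] at s219
      have s220 := congrArg (fun t => (N (N (N t)))) (hs12 x4 (b (N x1) x2 x3) x5)
      simp only [map_neg, b1neg, b2neg, b3neg] at s220
      have s221 := congrArg (fun t => (N t)) (hs12 x4 (b (N x1) (N x2) (N x3)) x5)
      simp only [map_neg, b1neg, b2neg, b3neg] at s221
      have s222 := congrArg (fun t => (N t)) (hs12 x4 (N (b (N x1) (N x2) x3)) x5)
      simp only [map_neg, b1neg, b2neg, b3neg] at s222
      have s223 := congrArg (fun t => (N t)) (hs12 x4 (N (b x1 (N x2) (N x3))) x5)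
      simp only [map_neg, b1neg, b2neg, b3neg] at s223
      have s224 := congrArg (fun t => (N t)) (hs12 x4 (N (b (N x1) x2 (N x3))) x5)
      simp only [map_neg, b1neg, b2neg, b3neg] at s224
      have s225 := congrArg (fun t => (N t)) (hs12 x4 (N (N (b (N x1) x2 x3))) x5)
      simp only [map_neg, b1neg, b2neg, b3neg] at s225
      have s226 := congrArg (fun t => (N t)) (hs12 x4 (N (N (b x1 (N x2) x3))) x5)
      simp only [map_neg, b1neg, b2neg, b3neg] at s226
      have s227 := congrArg (fun t => (N t)) (hs12 x4 (N (N (b x1 x2 (N x3)))) x5)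
      simp only [map_neg, b1neg, b2neg, b3neg] at s227
      have s228 := congrArg (fun t => (N t)) (hs12 x4 (N (N (N (b x1 x2 x3)))) x5)
      simp only [map_neg, b1neg, b2neg, b3neg] at s228
      have s229 := congrArg (fun t => (N (N t))) (hs12 (N x4) (b x1 x2 x3) (N x5))
      simp only [map_neg, b1neg, b2neg, b3neg] at s229
      have s230 := congrArg (fun t => (N (N (N t)))) (hs12 (N x4) (b x1 x2 x3) x5)
      simp only [map_neg, b1neg, b2neg, b3neg] at s230
      have s231 := congrArg (fun t => (N (N (N t)))) (hs12 x4 (b x1 x2 x3) (N x5))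
      simp only [map_neg, b1neg, b2neg, b3neg] at s231
      have s232 := congrArg (fun t => (N (N (N (N t))))) (hs12 x4 (b x1 x2 x3) x5)
      simp only [map_neg, b1neg, b2neg, b3neg] at s232
      have s233 := congrArg (fun t => (N t)) (hs12 x4 (N (N (b x1 x2 x3))) (N x5))
      simp only [map_neg, b1neg, b2neg, b3neg] at s233
      have s234 := congrArg (fun t => (N t)) (hs12 (N x4) (N (N (b x1 x2 x3))) x5)
      simp only [map_neg, b1neg, b2neg, b3neg] at s234
      have s235 := congrArg (fun t => (N (N t))) (hs12 x4 (N (N (b x1 x2 x3))) x5)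
      simp only [map_neg, b1neg, b2neg, b3neg] at s235
      have s236 := congrArg (fun t => (N t)) (hs12 x3 (N (N (b x1 x2 x4))) (N x5))
      simp only [map_neg, b1neg, b2neg, b3neg] at s236
      have s237 := congrArg (fun t => (N t)) (hs12 (N x3) (N (N (b x1 x2 x4))) x5)
      simp only [map_neg, b1neg, b2neg, b3neg] at s237
      have s238 := congrArg (fun t => (N (N t))) (hs12 x3 (N (N (b x1 x2 x4))) x5)
      simp only [map_neg, b1neg, b2neg, b3neg] at s238
      linear_combination (norm := abel1) f1 - f2 - f3 + f4 - f5 + f6 + f7 - f8 - f9 + f10 + f11 - f12 + f13 - f14 - f15 + (hfi x1 (N x2) (N x3) (N x4) (N x5)) - f16 + f17 + f18 - f19 + f20 - f21 - f22 + (hfi (N x1) x2 (N x3) (N x4) (N x5)) + f23 - f24 - f25 + (hfi (N x1) (N x2) x3 (N x4) (N x5)) - f26 + (hfi (N x1) (N x2) (N x3) x4 (N x5)) + (hfi (N x1) (N x2) (N x3) (N x4) x5) - g27 - g28 + g29 + g30 - g31 - g32 + g33 - g34 + w35 - w36 + g37 - w38 + w39 - w40 + w41 + g42 + g43 + g44 -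 g45 + g46 - w47 + w48 - w49 - g50 - g51 - g52 + g53 - g54 + g55 - w56 + w57 + w58 - hs12 (N x3) (N (b (N x1) (N x2) x4)) x5 - hs12 (N x3) (N (b x1 (N x2) (N x4))) x5 - hs12 (N x3) (N (b (N x1) x2 (N x4))) x5 + hs12 (N x3) (N (N (b (N x1) x2 x4))) x5 + hs12 (N x3) (N (N (b x1 (N x2) x4))) x5 + hs12 (N x3) (N (N (b x1 x2 (N x4)))) x5 - hs12 (N x3) (N (N (N (b x1 x2 x4)))) x5 - hs12 x3 (N (b (N x1) (N x2) x4)) (N x5) - hs12 x3 (N (b x1 (N x2) (N x4))) (N x5) - hs12 x3 (N (b (N x1) x2 (N x4))) (N x5) + hs12 x3 (N (N (b (N x1) x2 x4))) (N x5) + hs12 x3 (N (N (b x1 (N x2) x4))) (N x5) + hs12 x3 (N (N (b x1 x2 (N x4)))) (N x5) - hs12 x3 (N (N (N (b x1 x2 x4)))) (N x5) + hs12 (N x3) (N (b (N x1) x2 x4)) (N x5) + hs12 (N x3) (N (b x1 (N x2) x4)) (N x5) + hs12 (N x3) (N (b x1 x2 (N x4))) (N x5) - hs12 (N x3) (N (N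 (b x1 x2 x4))) (N x5) - s59 - s60 - s61 + s62 + s63 + s64 + s65 - s66 - s67 - s68 + s69 - s70 - s71 - s72 + s73 + s74 + s75 + s76 - s77 + s78 - s79 - s80 + s81 - s82 + s83 + s84 - s85 - s86 + s87 + s88 - s89 - s90 + s91 + s92 - s93 - s94 + hs12 x3 (b (N x1) (N x2) (N x4)) (N x5) + hs12 (N x3) (b (N x1) (N x2) (N x4)) x5 + hs23 (N x3) (N x5) (N (b x1 x2 (N x4))) - s95 - s96 - s97 + s98 + s99 + s100 - s101 + hs23 (N x3) (N x5) (N (b x1 (N x2) x4)) - s102 - s103 - s104 + s105 + s106 + s107 - s108 - s109 + s110 + s111 + s112 - s113 - s114 - s115 + s116 + hs23 x3 (N x5) (b (N x1) (N x2) (N x4)) - hs23 x3 (N x5) (N (b (N x1) (N x2) x4)) - hs23 x3 (N x5) (N (b x1 (N x2) (N x4))) - hs23 x3 (N x5) (N (b (N x1) x2 (N x4))) + hs23 x3 (N x5) (N (N (b (N x1) x2 x4))) + hs23 x3 (N x5) (N (N (b x1 (N x2) x4))) + hs23 x3 (N x5) (N (N (b x1 x2 (N x4)))) - hs23 x3 (N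 x5) (N (N (N (b x1 x2 x4)))) + s117 - s118 - s119 + s120 - hs23 (N x4) (N x5) (N (b x1 x2 (N x3))) + s121 + s122 + s123 - s124 - s125 - s126 + s127 - hs23 (N x4) (N x5) (N (b x1 (N x2) x3)) + s128 + s129 + s130 - s131 - s132 - s133 + s134 + hs23 (N x3) (N x5) (N (b (N x1) x2 x4)) - s135 - s136 - s137 + s138 + s139 + s140 - s141 - hs23 (N x4) (N x5) (N (b (N x1) x2 x3)) + s142 + s143 + s144 - s145 - s146 - s147 + s148 + s149 - s150 - s151 - s152 + s153 + s154 + s155 - s156 + hs23 (N x3) x5 (b (N x1) (N x2) (N x4)) - hs23 (N x3) x5 (N (b (N x1) (N x2) x4)) - hs23 (N x3) x5 (N (b x1 (N x2) (N x4))) - hs23 (N x3) x5 (N (b (N x1) x2 (N x4))) + hs23 (N x3) x5 (N (N (b (N x1) x2 x4))) + hs23 (N x3) x5 (N (N (b x1 (N x2) x4))) + hs23 (N x3) x5 (N (N (b x1 x2 (N x4)))) - hs23 (N x3) x5 (N (N (N (b x1 x2 x4)))) - s157 + s158 + s159 - s160 + hs23 (N x4) (N x5) (N (N (b x1 x2 x3)))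 - s161 - s162 + s163 - hs23 (N x3) (N x5) (N (N (b x1 x2 x4))) + s164 + s165 - s166 - hs23 x4 (N x5) (b (N x1) (N x2) (N x3)) + hs23 x4 (N x5) (N (b (N x1) (N x2) x3)) + hs23 x4 (N x5) (N (b x1 (N x2) (N x3))) + hs23 x4 (N x5) (N (b (N x1) x2 (N x3))) - hs23 x4 (N x5) (N (N (b (N x1) x2 x3))) - hs23 x4 (N x5) (N (N (b x1 (N x2) x3))) - hs23 x4 (N x5) (N (N (b x1 x2 (N x3)))) + hs23 x4 (N x5) (N (N (N (b x1 x2 x3)))) - hs23 (N x4) x5 (b (N x1) (N x2) (N x3)) + hs23 (N x4) x5 (N (b (N x1) (N x2) x3)) + hs23 (N x4) x5 (N (b x1 (N x2) (N x3))) + hs23 (N x4) x5 (N (b (N x1) x2 (N x3))) - hs23 (N x4) x5 (N (N (b (N x1) x2 x3))) - hs23 (N x4) x5 (N (N (b x1 (N x2) x3))) - hs23 (N x4) x5 (N (N (b x1 x2 (N x3)))) + hs23 (N x4) x5 (N (N (N (b x1 x2 x3)))) - hs12 (N x3) (N (b x1 x2 (N x4))) (N x5) + s167 + s168 + s169 -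 s170 - s171 - s172 + s173 - hs12 (N x3) (N (b x1 (N x2) x4)) (N x5) + s174 + s175 + s176 - s177 - s178 - s179 + s180 + s181 - s182 - s183 - s184 + s185 + s186 + s187 - s188 - hs12 x3 (b (N x1) (N x2) (N x4)) (N x5) + hs12 x3 (N (b (N x1) (N x2) x4)) (N x5) + hs12 x3 (N (b x1 (N x2) (N x4))) (N x5) + hs12 x3 (N (b (N x1) x2 (N x4))) (N x5) - hs12 x3 (N (N (b (N x1) x2 x4))) (N x5) - hs12 x3 (N (N (b x1 (N x2) x4))) (N x5) - hs12 x3 (N (N (b x1 x2 (N x4)))) (N x5) + hs12 x3 (N (N (N (b x1 x2 x4)))) (N x5) - s189 + s190 + s191 - s192 + hs12 (N x4) (N (b x1 x2 (N x3))) (N x5) - s193 - s194 - s195 + s196 + s197 + s198 - s199 + hs12 (N x4) (N (b x1 (N x2) x3)) (N x5) - s200 - s201 - s202 + s203 + s204 + s205 - s206 - hs12 (N x3) (N (b (N x1) x2 x4)) (N x5) + s207 + s208 + s209 - s210 - s211 - s212 + s213 + hs12 (N x4) (N (b (N x1) x2 x3)) (N x5) - s214 - s215 - s216 + s217 + s218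 + s219 - s220 - s221 + s222 + s223 + s224 - s225 - s226 - s227 + s228 - hs12 (N x3) (b (N x1) (N x2) (N x4)) x5 + hs12 (N x3) (N (b (N x1) (N x2) x4)) x5 + hs12 (N x3) (N (b x1 (N x2) (N x4))) x5 + hs12 (N x3) (N (b (N x1) x2 (N x4))) x5 - hs12 (N x3) (N (N (b (N x1) x2 x4))) x5 - hs12 (N x3) (N (N (b x1 (N x2) x4))) x5 - hs12 (N x3) (N (N (b x1 x2 (N x4)))) x5 + hs12 (N x3) (N (N (N (b x1 x2 x4)))) x5 + s229 - s230 - s231 + s232 - hs12 (N x4) (N (N (b x1 x2 x3))) (N x5) + s233 + s234 - s235 + hs12 (N x3) (N (N (b x1 x2 x4))) (N x5) - s236 - s237 + s238 + hs12 x4 (b (N x1) (N x2) (N x3)) (N x5) - hs12 x4 (N (b (N x1) (N x2) x3)) (N x5) - hs12 x4 (N (b x1 (N x2) (N x3))) (N x5) - hs12 x4 (N (b (N x1) x2 (N x3))) (N x5) + hs12 x4 (N (N (b (N x1) x2 x3))) (N x5) + hs12 x4 (N (N (b x1 (N x2) x3))) (N x5) + hs12 x4 (N (N (b x1 x2 (N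 x3)))) (N x5) - hs12 x4 (N (N (N (b x1 x2 x3)))) (N x5) + hs12 (N x4) (b (N x1) (N x2) (N x3)) x5 - hs12 (N x4) (N (b (N x1) (N x2) x3)) x5 - hs12 (N x4) (N (b x1 (N x2) (N x3))) x5 - hs12 (N x4) (N (b (N x1) x2 (N x3))) x5 + hs12 (N x4) (N (N (b (N x1) x2 x3))) x5 + hs12 (N x4) (N (N (b x1 (N x2) x3))) x5 + hs12 (N x4) (N (N (b x1 x2 (N x3)))) x5 - hs12 (N x4) (N (N (N (b x1 x2 x3)))) x5
  constructor
  · rintro ⟨-, -, hcomp⟩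
    refine ⟨?_, ?_, ?_⟩
    · refine ⟨fun y z => ⟨fun u v => ?_, fun c u => ?_⟩,
        fun x z => ⟨fun u v => ?_, fun c u => ?_⟩,
        fun x y => ⟨fun u v => ?_, fun c u => ?_⟩⟩ <;>
      simp only [map_add, map_smul, b1add, b2add, b3add, b1smul, b2smul, b3smul] <;> module
    · constructor
      · intro x y z
        have e1 := congrArg N (hs12 x y z)
        simp only [map_neg] at e1
        simp only []
        linear_combination (norm := abel1) hs12 (N x) y z + hs12 x (N y) z + hs12 x y (N z) - e1
      · intro x y z
        have e1 := congrArg N (hs23 x y z)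
        simp only [map_neg] at e1
        simp only []
        linear_combination (norm := abel1) hs23 (N x) y z + hs23 x (N y) z + hs23 x y (N z) - e1
    · intro x1 x2 x3 x4 x5
      have hc := hcomp x1 x2 x3 x4 x5
      simp only [deformedBracket, map_add, map_sub, b1add, b1sub, b2add, b2sub, b3add, b3sub] at hc
      simp only [map_add, map_sub, b1add, b1sub, b2add, b2sub, b3add, b3sub]
      have f239 := (congrArg N (congrArg N (hfi x1 x2 x3 x4 x5)))
      simp only [map_add] at f239
      have f240 := (congrArg N (hfi x1 x2 x3 x4 (N x5)))
      simp only [map_add] at f240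
      have f241 := (congrArg N (hfi x1 x2 x3 (N x4) x5))
      simp only [map_add] at f241
      have f242 := (congrArg N (hfi x1 x2 (N x3) x4 x5))
      simp only [map_add] at f242
      have f243 := (congrArg N (hfi x1 (N x2) x3 x4 x5))
      simp only [map_add] at f243
      have f244 := (congrArg N (hfi (N x1) x2 x3 x4 x5))
      simp only [map_add] at f244
      linear_combination (norm := abel1) f239 - f240 - f241 + (hfi x1 x2 x3 (N x4) (N x5)) - f242 + (hfi x1 x2 (N x3) x4 (N x5)) + (hfi x1 x2 (N x3) (N x4) x5) - f243 + (hfi x1 (N x2) x3 x4 (N x5)) + (hfi x1 (N x2) x3 (N x4) x5) + (hfi x1 (N x2) (N x3) x4 x5) - f244 + (hfi (N x1) x2 x3 x4 (N x5)) + (hfi (N x1) x2 x3 (N x4) x5) + (hfi (N x1) x2 (N x3) x4 x5) + (hfi (N x1) (N x2) x3 x4 x5) - hc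
  · rintro ⟨hCt, hCs, hCf⟩
    refine ⟨⟨⟨hl1, hl2, hl3⟩, ⟨hs12, hs23⟩, hfi⟩, P3, ?_⟩
    intro x1 x2 x3 x4 x5
    have hcf := hCf x1 x2 x3 x4 x5
    simp only [map_add, map_sub, b1add, b1sub, b2add, b2sub, b3add, b3sub] at hcf
    simp only [deformedBracket, map_add, map_sub, b1add, b1sub, b2add, b2sub, b3add, b3sub]
    have f245 := (congrArg N (congrArg N (hfi x1 x2 x3 x4 x5)))
    simp only [map_add] at f245
    have f246 := (congrArg N (hfi x1 x2 x3 x4 (N x5)))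
    simp only [map_add] at f246
    have f247 := (congrArg N (hfi x1 x2 x3 (N x4) x5))
    simp only [map_add] at f247
    have f248 := (congrArg N (hfi x1 x2 (N x3) x4 x5))
    simp only [map_add] at f248
    have f249 := (congrArg N (hfi x1 (N x2) x3 x4 x5))
    simp only [map_add] at f249
    have f250 := (congrArg N (hfi (N x1) x2 x3 x4 x5))
    simp only [map_add] at f250
    linear_combination (norm := abel1) f245 - f246 - f247 + (hfi x1 x2 x3 (N x4) (N x5)) - f248 + (hfi x1 x2 (N x3) x4 (N x5)) + (hfi x1 x2 (N x3) (N x4) x5) - f249 + (hfi x1 (N x2) x3 x4 (N x5)) + (hfi x1 (N x2) x3 (N x4) x5) + (hfi x1 (N x2) (N x3) x4 x5) - f250 + (hfi (N x1) x2 x3 x4 (N x5)) + (hfi (N x1) x2 x3 (N x4) x5) + (hfi (N x1) x2 (N x3) x4 x5) + (hfi (N x1) (N x2) x3 x4 x5) - hcf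
end
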